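/- arXiv:1401.4708 — 8 statements merged into one kernel-verified Lean document; each statement's English description precedes it below -/
import Mathlib

section
/- For a prime p ≡ 3 (mod 4) and integer k ≥ 1, the group G_{p^k} = {a + bi ∈ Z[i]/p^kZ[i] : a² + b² ≡ 1 (mod p^k)} has order p^{k−1}(p+1). -/
open Finset

lemma card_linear_left (p : ℕ) [Fact p.Prime] (α β γ : ZMod p) (hα : α ≠ 0) :
    (univ.filter (fun ab : ZMod p × ZMod p => α * ab.1 + β * ab.2 = γ)).card = p := by
  have : (univ.filter (fun ab : ZMod p × ZMod p => α * ab.1 + β * ab.2 = γ)).card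
      = (univ : Finset (ZMod p)).card := by
    apply Finset.card_nbij' (fun ab => ab.2) (fun b => (α⁻¹ * (γ - β * b), b))
    · intro a _; exact Finset.mem_univ _
    · intro b _
      simp only [Finset.mem_coe, Finset.mem_filter, Finset.mem_univ, true_and]
      field_simp
      ring
    · intro a ha
      simp only [Finset.mem_coe, Finset.mem_filter, Finset.mem_univ, true_and] at ha
      ext
      · field_simp
        linear_combination -ha
      · rfl
    · intro b _; rfl
  rw [this, Finset.card_univ, ZMod.card]

lemma card_linear (p : ℕ) [Fact p.Prime] (α β γ : ZMod p) (h : ¬(α = 0 ∧ β = 0)) :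
    (univ.filter (fun ab : ZMod p × ZMod p => α * ab.1 + β * ab.2 = γ)).card = p := by
  by_cases hα : α = 0
  · have hβ : β ≠ 0 := fun hb => h ⟨hα, hb⟩
    have : (univ.filter (fun ab : ZMod p × ZMod p => α * ab.1 + β * ab.2 = γ)).card
        = (univ.filter (fun ab : ZMod p × ZMod p => β * ab.1 + α * ab.2 = γ)).card := by
      apply Finset.card_nbij' (fun ab => ab.swap) (fun ab => ab.swap)
      · intro a ha
        simp only [Finset.mem_coe, Finset.mem_filter, Finset.mem_univ, true_and] at ha ⊢
        rw [Prod.fst_swap, Prod.snd_swap, ← ha]; ring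
      · intro a ha
        simp only [Finset.mem_coe, Finset.mem_filter, Finset.mem_univ, true_and] at ha ⊢
        rw [Prod.fst_swap, Prod.snd_swap, ← ha]; ring
      · intro a _; rfl
      · intro a _; rfl
    rw [this]
    exact card_linear_left p β α γ hβ
  · exact card_linear_left p α β γ hα

lemma zmodp_two_ne_zero (p : ℕ) [Fact p.Prime] (h3 : p % 4 = 3) : (2 : ZMod p) ≠ 0 := by
  have hp : p.Prime := Fact.out
  intro h
  have hd : (p : ℕ) ∣ 2 := by
    have : ((2 : ℕ) : ZMod p) = 0 := by exact_mod_cast h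
    exact (ZMod.natCast_eq_zero_iff 2 p).mp this
  have : p = 2 := (Nat.prime_dvd_prime_iff_eq hp Nat.prime_two).mp hd
  omega

lemma card_sols_prime (p : ℕ) [Fact p.Prime] (h3 : p % 4 = 3) :
    (univ.filter (fun x : ZMod p × ZMod p => x.1 ^ 2 + x.2 ^ 2 = 1)).card = p + 1 := by
  have hp : p.Prime := Fact.out
  have h2 : (2 : ZMod p) ≠ 0 := zmodp_two_ne_zero p h3
  have hsq : ¬ IsSquare (-1 : ZMod p) := by
    rw [ZMod.exists_sq_eq_neg_one_iff]
    simp [h3]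
  have hden : ∀ t : ZMod p, 1 + t ^ 2 ≠ 0 := by
    intro t ht
    exact hsq ⟨t, by rw [← sq]; linear_combination -ht⟩
  set f : ZMod p → ZMod p × ZMod p :=
    fun t => ((1 - t ^ 2) / (1 + t ^ 2), 2 * t / (1 + t ^ 2)) with hf
  have hmem : ∀ t, (f t).1 ^ 2 + (f t).2 ^ 2 = 1 := by
    intro t
    have h := hden t
    simp only [hf]
    field_simp
    ring
  have hne : ∀ t, (f t).1 ≠ -1 := by
    intro t h
    have hd := hden t
    simp only [hf] at h
    rw [div_eq_iff hd] at h
    exact h2 (by linear_combination h)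
  have hrec : ∀ t, (f t).2 / (1 + (f t).1) = t := by
    intro t
    have hd := hden t
    have h1 : 1 + (f t).1 = 2 / (1 + t ^ 2) := by
      simp only [hf]
      field_simp
      norm_num
    rw [h1]
    simp only [hf]
    rw [div_div_div_cancel_right₀]
    · rw [div_eq_iff h2]; ring
    · exact hd
  have hkey : (univ.filter (fun x : ZMod p × ZMod p => x.1 ^ 2 + x.2 ^ 2 = 1))
      = insert ((-1 : ZMod p), (0 : ZMod p)) (Finset.image f univ) := by
    ext ⟨x, y⟩
    simp only [Finset.mem_filter, Finset.mem_univ, true_and, Finset.mem_insert,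
      Finset.mem_image]
    constructor
    · intro hxy
      by_cases hx : x = -1
      · left
        have hy : y ^ 2 = 0 := by rw [hx] at hxy; linear_combination hxy
        have : y = 0 := pow_eq_zero_iff (n := 2) (by norm_num) |>.mp hy
        rw [hx, this]
      · right
        have hx1 : (1 : ZMod p) + x ≠ 0 := fun h => hx (by linear_combination h)
        set t : ZMod p := y / (1 + x) with hts
        have ht2 : 1 + t ^ 2 = 2 / (1 + x) := by
          rw [hts]
          field_simp
          linear_combination hxy
        have hinv : 2 / (1 + t ^ 2) = 1 + x := by
          rw [ht2, div_div_eq_mul_div, mul_comm, mul_div_assoc, div_self h2, mul_one]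
        refine ⟨t, ?_⟩
        have c1 : (1 - t ^ 2) / (1 + t ^ 2) = x := by
          rw [show (1 : ZMod p) - t ^ 2 = 2 - (1 + t ^ 2) by ring, sub_div,
            div_self (hden t), hinv]
          ring
        have c2 : 2 * t / (1 + t ^ 2) = y := by
          rw [mul_comm, mul_div_assoc, hinv, hts, div_mul_cancel₀ _ hx1]
        simp only [hf]
        rw [c1, c2]
    · rintro (h | ⟨t, ht⟩)
      · have hx : x = -1 := congrArg Prod.fst h
        have hy : y = 0 := congrArg Prod.snd h
        rw [hx, hy]; ring
      · have hx : (f t).1 = x := congrArg Prod.fst ht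
        have hy : (f t).2 = y := congrArg Prod.snd ht
        rw [← hx, ← hy]
        exact hmem t
  have hnotmem : ((-1 : ZMod p), (0 : ZMod p)) ∉ Finset.image f univ := by
    intro h
    rcases Finset.mem_image.mp h with ⟨t, _, ht⟩
    exact hne t (by rw [ht])
  have hinj : Function.Injective f := by
    intro a b hab
    have := hrec a
    rw [hab, hrec b] at this
    exact this.symm
  rw [hkey, Finset.card_insert_of_notMem hnotmem, Finset.card_image_of_injective _ hinj,
    Finset.card_univ, ZMod.card, add_comm]

lemma fiber_card (p : ℕ) [Fact p.Prime] (h2 : (2 : ZMod p) ≠ 0) (k : ℕ) (hk : 1 ≤ k)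
    [NeZero (p ^ k)] [NeZero (p ^ (k + 1))]
    (x y : ZMod (p ^ k)) (hxy : x ^ 2 + y ^ 2 = 1) :
    ((univ.filter (fun z : ZMod (p ^ (k + 1)) × ZMod (p ^ (k + 1)) =>
        z.1 ^ 2 + z.2 ^ 2 = 1)).filter
      (fun z => (ZMod.castHom (pow_dvd_pow p (Nat.le_succ k)) (ZMod (p ^ k)) z.1,
                 ZMod.castHom (pow_dvd_pow p (Nat.le_succ k)) (ZMod (p ^ k)) z.2) = (x, y))).card
      = p := by
  have hp : p.Prime := Fact.out
  have hppos : 0 < p := hp.pos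
  have hdvd : p ^ k ∣ p ^ (k + 1) := pow_dvd_pow p (Nat.le_succ k)
  have hpm : p ∣ p ^ (k + 1) := dvd_pow_self p (Nat.succ_ne_zero k)
  set c2n : ZMod (p ^ (k + 1)) →+* ZMod (p ^ k) := ZMod.castHom hdvd (ZMod (p ^ k)) with hc2n
  set c2p : ZMod (p ^ (k + 1)) →+* ZMod p := ZMod.castHom hpm (ZMod p) with hc2p
  have hcastn : ∀ z : ZMod (p ^ (k + 1)), c2n z = ((z.val : ℕ) : ZMod (p ^ k)) := by
    intro z; rw [hc2n, ZMod.castHom_apply, ← ZMod.natCast_val]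
  have hcastp : ∀ z : ZMod (p ^ (k + 1)), c2p z = ((z.val : ℕ) : ZMod p) := by
    intro z; rw [hc2p, ZMod.castHom_apply, ← ZMod.natCast_val]
  -- the parametrization of the kernel of c2n
  set g : ZMod p → ZMod (p ^ (k + 1)) := fun a => ((a.val * p ^ k : ℕ) : ZMod (p ^ (k + 1))) with hg
  have hg0 : g 0 = 0 := by simp [hg]
  have hgval : ∀ q : ZMod p, g q = ((q.val : ℕ) : ZMod (p ^ (k + 1))) * ((p ^ k : ℕ) : ZMod (p ^ (k + 1))) := by
    intro q; rw [hg]; push_cast; ring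
  have hginj : Function.Injective g := by
    intro a b hab
    simp only [hg] at hab
    simp only [ZMod.natCast_eq_natCast_iff] at hab
    rw [pow_succ, mul_comm (p ^ k) p] at hab
    have hmod := Nat.ModEq.mul_right_cancel' (c := p ^ k) (pow_ne_zero _ hppos.ne') hab
    have hval : a.val % p = b.val % p := hmod
    rw [Nat.mod_eq_of_lt (ZMod.val_lt a), Nat.mod_eq_of_lt (ZMod.val_lt b)] at hval
    calc a = ((a.val : ℕ) : ZMod p) := (ZMod.natCast_rightInverse a).symm
    _ = ((b.val : ℕ) : ZMod p) := by rw [hval]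
    _ = b := ZMod.natCast_rightInverse b
  have hgsurj : ∀ z : ZMod (p ^ (k + 1)), c2n z = 0 → ∃ a : ZMod p, g a = z := by
    intro z hz
    rw [hcastn, ZMod.natCast_eq_zero_iff] at hz
    obtain ⟨c, hc⟩ := hz
    have hclt : c < p := by
      have hlt := ZMod.val_lt z
      rw [hc, pow_succ] at hlt
      exact lt_of_mul_lt_mul_left hlt (Nat.zero_le _)
    refine ⟨(c : ZMod p), ?_⟩
    simp only [hg]
    have hcv : ((c : ZMod p)).val = c := by
      rw [ZMod.val_natCast, Nat.mod_eq_of_lt hclt]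
    rw [hcv, show c * p ^ k = z.val by rw [hc]; ring]
    exact ZMod.natCast_rightInverse z
  have hker : ∀ w : ZMod (p ^ (k + 1)), c2p w = 0 → ((p ^ k : ℕ) : ZMod (p ^ (k + 1))) * w = 0 := by
    intro w hw
    rw [hcastp, ZMod.natCast_eq_zero_iff] at hw
    obtain ⟨c, hc⟩ := hw
    have hrw : ((p ^ k : ℕ) : ZMod (p ^ (k + 1))) * w = ((p ^ k * w.val : ℕ) : ZMod (p ^ (k + 1))) := by
      push_cast
      rw [ZMod.natCast_val, ZMod.cast_id]
    rw [hrw, ZMod.natCast_eq_zero_iff, hc]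
    exact ⟨c, by ring⟩
  have hc2pg : ∀ a : ZMod p, c2p (g a) = 0 := by
    intro a
    simp only [hg]
    simp only [map_natCast]
    push_cast
    rw [ZMod.natCast_self, zero_pow (by omega : k ≠ 0), mul_zero]
  have hvalp : ∀ q : ZMod p, ((q.val : ℕ) : ZMod p) = q := fun q => ZMod.natCast_rightInverse q
  have hgmul : ∀ (z : ZMod (p ^ (k + 1))) (a : ZMod p), z * g a = g (c2p z * a) := by
    intro z a
    set w : ZMod (p ^ (k + 1)) := z * ((a.val : ℕ) : ZMod (p ^ (k + 1))) - (((c2p z * a).val : ℕ) : ZMod (p ^ (k + 1))) with hw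
    have hw0 : c2p w = 0 := by
      rw [hw, map_sub, map_mul, map_natCast, map_natCast, hvalp, hvalp, sub_self]
    have hkw := hker w hw0
    have hdiff : z * g a - g (c2p z * a) = ((p ^ k : ℕ) : ZMod (p ^ (k + 1))) * w := by
      rw [hgval, hgval, hw]; ring
    have : z * g a - g (c2p z * a) = 0 := by rw [hdiff, hkw]
    exact sub_eq_zero.mp this
  have hgadd : ∀ a b : ZMod p, g a + g b = g (a + b) := by
    intro a b
    set w : ZMod (p ^ (k + 1)) := ((a.val : ℕ) : ZMod (p ^ (k + 1))) + ((b.val : ℕ) : ZMod (p ^ (k + 1)))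
      - (((a + b).val : ℕ) : ZMod (p ^ (k + 1))) with hw
    have hw0 : c2p w = 0 := by
      rw [hw, map_sub, map_add, map_natCast, map_natCast, map_natCast, hvalp, hvalp, hvalp,
        sub_self]
    have hkw := hker w hw0
    have hdiff : g a + g b - g (a + b) = ((p ^ k : ℕ) : ZMod (p ^ (k + 1))) * w := by
      rw [hgval, hgval, hgval, hw]; ring
    have : g a + g b - g (a + b) = 0 := by rw [hdiff, hkw]
    exact sub_eq_zero.mp this
  have hgsq : ∀ a b : ZMod p, g a * g b = 0 := by
    intro a b
    rw [hgmul (g a) b, hc2pg a, zero_mul, hg0]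
  have hc2ng : ∀ a : ZMod p, c2n (g a) = 0 := by
    intro a
    simp only [hg]
    rw [map_natCast, ZMod.natCast_eq_zero_iff]
    exact Dvd.intro_left _ rfl
  -- lifts of x and y
  set x₀ : ZMod (p ^ (k + 1)) := ((x.val : ℕ) : ZMod (p ^ (k + 1))) with hx₀def
  set y₀ : ZMod (p ^ (k + 1)) := ((y.val : ℕ) : ZMod (p ^ (k + 1))) with hy₀def
  have hx₀ : c2n x₀ = x := by
    rw [hx₀def, map_natCast]
    exact ZMod.natCast_rightInverse x
  have hy₀ : c2n y₀ = y := by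
    rw [hy₀def, map_natCast]
    exact ZMod.natCast_rightInverse y
  obtain ⟨c, hc⟩ := hgsurj (x₀ ^ 2 + y₀ ^ 2 - 1)
    (by rw [map_sub, map_add, map_pow, map_pow, hx₀, hy₀, hxy, map_one, sub_self])
  set xb := c2p x₀ with hxb
  set yb := c2p y₀ with hyb
  have hlin : ∀ a b : ZMod p,
      ((x₀ + g a) ^ 2 + (y₀ + g b) ^ 2 = 1) ↔ (2 * xb * a + 2 * yb * b = -c) := by
    intro a b
    have expand : (x₀ + g a) ^ 2 + (y₀ + g b) ^ 2
        = g c + ((x₀ * g a + x₀ * g a) + (y₀ * g b + y₀ * g b)) + g a * g a + g b * g b + 1 := by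
      rw [hc]; ring
    rw [expand, hgsq a a, hgsq b b, hgmul x₀ a, hgmul y₀ b, add_zero, add_zero]
    simp only [hgadd]
    rw [add_eq_right]
    constructor
    · intro h
      have h0 := hginj (h.trans hg0.symm)
      linear_combination h0
    · intro h
      rw [show c + (xb * a + xb * a + (yb * b + yb * b)) = 0 from by linear_combination h, hg0]
  have hnv : ¬(2 * xb = 0 ∧ 2 * yb = 0) := by
    rintro ⟨ha, hb⟩
    have hxb0 : xb = 0 := by rcases mul_eq_zero.mp ha with h | h; exact absurd h h2; exact h
    have hyb0 : yb = 0 := by rcases mul_eq_zero.mp hb with h | h; exact absurd h h2; exact h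
    have h1 : c2p (x₀ ^ 2 + y₀ ^ 2) = 1 := by
      rw [show x₀ ^ 2 + y₀ ^ 2 = g c + 1 from by rw [hc]; ring, map_add, hc2pg, map_one,
        zero_add]
    rw [map_add, map_pow, map_pow, ← hxb, ← hyb, hxb0, hyb0] at h1
    simp at h1
  have key : (univ.filter
        (fun ab : ZMod p × ZMod p => 2 * xb * ab.1 + 2 * yb * ab.2 = -c)).card
      = ((univ.filter (fun z : ZMod (p ^ (k + 1)) × ZMod (p ^ (k + 1)) => z.1 ^ 2 + z.2 ^ 2 = 1)).filter
          (fun z => (c2n z.1, c2n z.2) = (x, y))).card := by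
    apply Finset.card_nbij (fun ab => (x₀ + g ab.1, y₀ + g ab.2))
    · intro ab hab
      simp only [Finset.mem_coe, mem_filter, mem_univ, true_and] at hab ⊢
      refine ⟨(hlin ab.1 ab.2).mpr hab, ?_⟩
      rw [Prod.mk.injEq]
      constructor
      · rw [map_add, hx₀, hc2ng, add_zero]
      · rw [map_add, hy₀, hc2ng, add_zero]
    · intro ab _ ab' _ hiab
      have e1 : x₀ + g ab.1 = x₀ + g ab'.1 := congrArg Prod.fst hiab
      have e2 : y₀ + g ab.2 = y₀ + g ab'.2 := congrArg Prod.snd hiab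
      have f1 := hginj (add_left_cancel e1)
      have f2 := hginj (add_left_cancel e2)
      exact Prod.ext f1 f2
    · rintro ⟨u, v⟩ huv
      rw [Finset.mem_coe, mem_filter, mem_filter] at huv
      obtain ⟨⟨_, hsol⟩, hcast⟩ := huv
      have hu : c2n u = x := congrArg Prod.fst hcast
      have hv : c2n v = y := congrArg Prod.snd hcast
      obtain ⟨a, ha⟩ := hgsurj (u - x₀) (by rw [map_sub, hu, hx₀, sub_self])
      obtain ⟨b, hb⟩ := hgsurj (v - y₀) (by rw [map_sub, hv, hy₀, sub_self])
      have hu' : u = x₀ + g a := by rw [ha]; ring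
      have hv' : v = y₀ + g b := by rw [hb]; ring
      refine ⟨(a, b), ?_, ?_⟩
      · rw [Finset.mem_coe, mem_filter]
        refine ⟨mem_univ _, ?_⟩
        apply (hlin a b).mp
        rw [← hu', ← hv']
        exact hsol
      · show (x₀ + g a, y₀ + g b) = (u, v)
        rw [hu', hv']
  rw [← key]
  exact card_linear p _ _ _ hnv

lemma card_sols_step (p : ℕ) [Fact p.Prime] (h2 : (2 : ZMod p) ≠ 0) (k : ℕ) (hk : 1 ≤ k)
    [NeZero (p ^ k)] [NeZero (p ^ (k + 1))] :
    (univ.filter (fun z : ZMod (p ^ (k + 1)) × ZMod (p ^ (k + 1)) =>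
        z.1 ^ 2 + z.2 ^ 2 = 1)).card
      = p * (univ.filter (fun x : ZMod (p ^ k) × ZMod (p ^ k) => x.1 ^ 2 + x.2 ^ 2 = 1)).card := by
  classical
  have hmaps : ∀ z ∈ (univ.filter (fun z : ZMod (p ^ (k + 1)) × ZMod (p ^ (k + 1)) =>
      z.1 ^ 2 + z.2 ^ 2 = 1)),
      (ZMod.castHom (pow_dvd_pow p (Nat.le_succ k)) (ZMod (p ^ k)) z.1,
       ZMod.castHom (pow_dvd_pow p (Nat.le_succ k)) (ZMod (p ^ k)) z.2)
        ∈ (univ.filter (fun x : ZMod (p ^ k) × ZMod (p ^ k) => x.1 ^ 2 + x.2 ^ 2 = 1)) := by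
    intro z hz
    rw [mem_filter] at hz ⊢
    refine ⟨mem_univ _, ?_⟩
    rw [← map_pow, ← map_pow, ← map_add, hz.2, map_one]
  rw [Finset.card_eq_sum_card_fiberwise hmaps]
  rw [Finset.sum_congr rfl (fun xy hxy => ?_), Finset.sum_const, smul_eq_mul, mul_comm]
  obtain ⟨x, y⟩ := xy
  rw [mem_filter] at hxy
  exact fiber_card p h2 k hk x y hxy.2

lemma card_sols_congr (a b : ℕ) [NeZero a] [NeZero b] (hab : a = b) :
    (univ.filter (fun x : ZMod a × ZMod a => x.1 ^ 2 + x.2 ^ 2 = 1)).card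
      = (univ.filter (fun x : ZMod b × ZMod b => x.1 ^ 2 + x.2 ^ 2 = 1)).card := by
  subst hab; rfl

theorem G_card_prime_pow_three_mod_four (p : ℕ) (hp : p.Prime) (h : p % 4 = 3)
    (k : ℕ) (hk : 1 ≤ k) :
    Nat.card {x : ZMod (p ^ k) × ZMod (p ^ k) // x.1 ^ 2 + x.2 ^ 2 = 1} =
      p ^ (k - 1) * (p + 1) := by
  haveI : Fact p.Prime := ⟨hp⟩
  have h2 : (2 : ZMod p) ≠ 0 := zmodp_two_ne_zero p h
  obtain ⟨j, rfl⟩ : ∃ j, k = j + 1 := ⟨k - 1, by omega⟩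
  clear hk
  simp only [Nat.add_sub_cancel]
  induction j with
  | zero =>
    haveI : NeZero (p ^ 1) := ⟨pow_ne_zero _ hp.pos.ne'⟩
    rw [Nat.card_eq_fintype_card, Fintype.card_subtype,
      card_sols_congr (p ^ (0 + 1)) p (by norm_num), pow_zero, one_mul]
    exact card_sols_prime p h
  | succ j ih =>
    haveI : NeZero (p ^ (j + 1)) := ⟨pow_ne_zero _ hp.pos.ne'⟩
    haveI : NeZero (p ^ (j + 1 + 1)) := ⟨pow_ne_zero _ hp.pos.ne'⟩
    rw [Nat.card_eq_fintype_card, Fintype.card_subtype] at ih ⊢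
    rw [card_sols_step p h2 (j + 1) (by omega), ih, pow_succ]
    ring
end

section
/- If m and n are coprime positive integers, then G_{mn} is isomorphic to G_m × G_n, and consequently Φ(mn) = Φ(m)Φ(n), where Φ(n) = |G_n|. -/
/-- Gaussian multiplication on pairs, modelling `ℤ[i]/nℤ[i]`. -/
def gmul {n : ℕ} (x y : ZMod n × ZMod n) : ZMod n × ZMod n :=
  (x.1 * y.1 - x.2 * y.2, x.1 * y.2 + x.2 * y.1)

/-- The set of norm-one elements of `ℤ[i]/nℤ[i]`. -/
def Gsub (n : ℕ) : Type := {x : ZMod n × ZMod n // x.1 ^ 2 + x.2 ^ 2 = 1}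

instance {n : ℕ} : Mul (Gsub n) :=
  ⟨fun x y => ⟨gmul x.1 y.1, by
    have hx := x.2
    have hy := y.2
    have key : (x.1.1 * y.1.1 - x.1.2 * y.1.2) ^ 2 + (x.1.1 * y.1.2 + x.1.2 * y.1.1) ^ 2 =
        (x.1.1 ^ 2 + x.1.2 ^ 2) * (y.1.1 ^ 2 + y.1.2 ^ 2) := by ring
    simp only [gmul]
    rw [key, hx, hy, one_mul]⟩⟩

theorem G_mul_equiv_of_coprime (m n : ℕ) (hm : 0 < m) (hn : 0 < n)
    (h : Nat.Coprime m n) :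
    (∃ e : Gsub (m * n) ≃ Gsub m × Gsub n, ∀ x y : Gsub (m * n), e (x * y) = e x * e y) ∧
      Nat.card (Gsub (m * n)) = Nat.card (Gsub m) * Nat.card (Gsub n) := by
  classical
  let c : ZMod (m * n) ≃+* ZMod m × ZMod n := ZMod.chineseRemainder h
  have norm1 : ∀ x : Gsub (m * n), (c x.1.1) ^ 2 + (c x.1.2) ^ 2 = 1 := fun x => by
    rw [← map_pow, ← map_pow, ← map_add, x.2, map_one]
  let f : Gsub (m * n) → Gsub m × Gsub n := fun x =>
    (⟨((c x.1.1).1, (c x.1.2).1), by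
        have := congrArg Prod.fst (norm1 x)
        simpa [Prod.pow_fst] using this⟩,
     ⟨((c x.1.1).2, (c x.1.2).2), by
        have := congrArg Prod.snd (norm1 x)
        simpa [Prod.pow_snd] using this⟩)
  let g : Gsub m × Gsub n → Gsub (m * n) := fun p =>
    ⟨(c.symm (p.1.1.1, p.2.1.1), c.symm (p.1.1.2, p.2.1.2)), by
      have : c.symm ((p.1.1.1, p.2.1.1) ^ 2 + (p.1.1.2, p.2.1.2) ^ 2) = c.symm 1 := by
        congr 1
        ext
        · simpa [Prod.pow_fst] using p.1.2
        · simpa [Prod.pow_snd] using p.2.2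
      rw [map_add, map_pow, map_pow, map_one] at this
      exact this⟩
  have hgf : ∀ x, g (f x) = x := fun x => by
    apply Subtype.ext
    show ((c.symm (c x.1.1), c.symm (c x.1.2)) : _ × _) = x.1
    simp
  have hfg : ∀ p, f (g p) = p := fun p => by
    have h1 : c (c.symm ((p.1.1.1, p.2.1.1) : ZMod m × ZMod n)) = (p.1.1.1, p.2.1.1) :=
      c.apply_symm_apply _
    have h2 : c (c.symm ((p.1.1.2, p.2.1.2) : ZMod m × ZMod n)) = (p.1.1.2, p.2.1.2) :=
      c.apply_symm_apply _
    refine Prod.ext (Subtype.ext ?_) (Subtype.ext ?_)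
    · show (((c (c.symm _)).1 : ZMod m), (c (c.symm _)).1) = p.1.1
      rw [h1, h2]
    · show (((c (c.symm _)).2 : ZMod n), (c (c.symm _)).2) = p.2.1
      rw [h1, h2]
  let e : Gsub (m * n) ≃ Gsub m × Gsub n := ⟨f, g, hgf, hfg⟩
  have hmul : ∀ x y : Gsub (m * n), e (x * y) = e x * e y := fun x y => by
    have hc1 : c ((x * y).1.1) = c x.1.1 * c y.1.1 - c x.1.2 * c y.1.2 := by
      show c (x.1.1 * y.1.1 - x.1.2 * y.1.2) = _
      rw [map_sub, map_mul, map_mul]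
    have hc2 : c ((x * y).1.2) = c x.1.1 * c y.1.2 + c x.1.2 * c y.1.1 := by
      show c (x.1.1 * y.1.2 + x.1.2 * y.1.1) = _
      rw [map_add, map_mul, map_mul]
    refine Prod.ext (Subtype.ext ?_) (Subtype.ext ?_)
    · show ((c (x * y).1.1).1, (c (x * y).1.2).1) = gmul _ _
      rw [hc1, hc2]; rfl
    · show ((c (x * y).1.1).2, (c (x * y).1.2).2) = gmul _ _
      rw [hc1, hc2]; rfl
  exact ⟨⟨e, hmul⟩, Nat.card_congr e |>.trans (Nat.card_prod _ _)⟩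
end

section
/- For n ≥ 2 and m ≥ 1: Φ(n^m) = n^{m−1}·Φ(n) if n ≢ 2 (mod 4), and Φ(n^m) = 2·n^{m−1}·Φ(n) if n ≡ 2 (mod 4) and m ≥ 2. -/
set_option linter.unusedSectionVars false

/-- `gPhi n` is the number of norm-one elements of `ℤ[i]/nℤ[i]`. -/
noncomputable def gPhi (n : ℕ) : ℕ :=
  Nat.card {x : ZMod n × ZMod n // x.1 ^ 2 + x.2 ^ 2 = 1}

def circEquivOfRingEquiv {R S : Type*} [CommRing R] [CommRing S] (e : R ≃+* S) :
    {x : R × R // x.1 ^ 2 + x.2 ^ 2 = 1} ≃ {x : S × S // x.1 ^ 2 + x.2 ^ 2 = 1} where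
  toFun p := ⟨(e p.1.1, e p.1.2), by
    rw [← map_pow, ← map_pow, ← map_add, p.2, map_one]⟩
  invFun p := ⟨(e.symm p.1.1, e.symm p.1.2), by
    rw [← map_pow, ← map_pow, ← map_add, p.2, map_one]⟩
  left_inv p := by ext <;> simp
  right_inv p := by ext <;> simp

def circEquivProd {R S : Type*} [CommRing R] [CommRing S] :
    {x : (R × S) × (R × S) // x.1 ^ 2 + x.2 ^ 2 = 1} ≃
      {x : R × R // x.1 ^ 2 + x.2 ^ 2 = 1} × {x : S × S // x.1 ^ 2 + x.2 ^ 2 = 1} where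
  toFun p := (⟨(p.1.1.1, p.1.2.1), congrArg Prod.fst p.2⟩, ⟨(p.1.1.2, p.1.2.2), congrArg Prod.snd p.2⟩)
  invFun p := ⟨((p.1.1.1, p.2.1.1), (p.1.1.2, p.2.1.2)), by
    have h1 := p.1.2; have h2 := p.2.2; ext <;> simpa⟩
  left_inv p := by ext <;> rfl
  right_inv p := by ext <;> rfl

lemma gPhi_mul (a b : ℕ) (h : a.Coprime b) : gPhi (a * b) = gPhi a * gPhi b := by
  rw [gPhi, gPhi, gPhi, ← Nat.card_prod]
  exact Nat.card_congr ((circEquivOfRingEquiv (ZMod.chineseRemainder h)).trans circEquivProd)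

section Lift
variable (n j : ℕ)

noncomputable def Xl (a b : ZMod (n^j)) : ZMod (n^(j+1)) :=
  (1 - Ring.inverse 2 * ((a.val : ZMod (n^(j+1)))^2 + (b.val : ZMod (n^(j+1)))^2 - 1))
    * (a.val : ZMod (n^(j+1)))

noncomputable def Yl (a b : ZMod (n^j)) : ZMod (n^(j+1)) :=
  (1 - Ring.inverse 2 * ((a.val : ZMod (n^(j+1)))^2 + (b.val : ZMod (n^(j+1)))^2 - 1))
    * (b.val : ZMod (n^(j+1)))

def tauD (t : ZMod n) : ZMod (n^(j+1)) := (n^j * t.val : ℕ)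

noncomputable def hlift (a b : ZMod (n^j)) (t : ZMod n) :
    ZMod (n^(j+1)) × ZMod (n^(j+1)) :=
  (Xl n j a b - tauD n j t * Yl n j a b, Yl n j a b + tauD n j t * Xl n j a b)

noncomputable abbrev piM : ZMod (n^(j+1)) →+* ZMod (n^j) :=
  ZMod.castHom (pow_dvd_pow n j.le_succ) (ZMod (n^j))

noncomputable def hdrop (x y : ZMod (n^(j+1))) : (ZMod (n^j) × ZMod (n^j)) × ZMod n :=
  ((piM n j x, piM n j y),
    (((y * Xl n j (piM n j x) (piM n j y) - x * Yl n j (piM n j x) (piM n j y)).val / n^j : ℕ)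
      : ZMod n))

variable {n j}

lemma neZeroN (h2 : 2 ≤ n) : NeZero (n^j) := ⟨(pow_pos (show 0 < n by omega) _).ne'⟩
lemma neZeroM (h2 : 2 ≤ n) : NeZero (n^(j+1)) := ⟨(pow_pos (show 0 < n by omega) _).ne'⟩

lemma pi_vcast (h2 : 2 ≤ n) (z : ZMod (n^j)) : piM n j ((z.val : ZMod (n^(j+1)))) = z := by
  haveI : NeZero (n^j) := neZeroN h2
  rw [map_natCast]
  exact ZMod.natCast_rightInverse z

lemma hNN (hj : 1 ≤ j) : ((n^j : ℕ) : ZMod (n^(j+1))) * ((n^j : ℕ) : ZMod (n^(j+1))) = 0 := by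
  rw [← Nat.cast_mul, ZMod.natCast_eq_zero_iff, ← pow_add]
  exact pow_dvd_pow n (by omega)

lemma hu (hn : Odd n) : (2 : ZMod (n^(j+1))) * Ring.inverse 2 = 1 := by
  apply Ring.mul_inverse_cancel
  have : ((2:ℕ) : ZMod (n^(j+1))) = (2 : ZMod (n^(j+1))) := by push_cast; ring
  rw [← this, ZMod.isUnit_iff_coprime]
  simpa using hn

lemma dvd_val_of_pi_eq_zero (h2 : 2 ≤ n) (x : ZMod (n^(j+1))) (hx : piM n j x = 0) :
    (n^j : ℕ) ∣ x.val := by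
  haveI : NeZero (n^(j+1)) := neZeroM h2
  rwa [ZMod.castHom_apply, ← ZMod.natCast_val, ZMod.natCast_eq_zero_iff] at hx

lemma eqN_of_pi_eq_zero (h2 : 2 ≤ n) (x : ZMod (n^(j+1))) (hx : piM n j x = 0) :
    ∃ D, x = ((n^j : ℕ) : ZMod (n^(j+1))) * D := by
  haveI : NeZero (n^(j+1)) := neZeroM h2
  have hdvd := dvd_val_of_pi_eq_zero h2 x hx
  refine ⟨((x.val / n^j : ℕ) : ZMod (n^(j+1))), ?_⟩
  rw [← Nat.cast_mul, Nat.mul_div_cancel' hdvd]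
  exact (ZMod.natCast_rightInverse x).symm

lemma pi_E_eq_zero (h2 : 2 ≤ n) {a b : ZMod (n^j)} (hab : a^2 + b^2 = 1) :
    piM n j ((a.val : ZMod (n^(j+1)))^2 + (b.val : ZMod (n^(j+1)))^2 - 1) = 0 := by
  rw [map_sub, map_add, map_pow, map_pow, pi_vcast h2, pi_vcast h2, map_one, hab, sub_self]

lemma pi_tauD (h2 : 2 ≤ n) (t : ZMod n) : piM n j (tauD n j t) = 0 := by
  rw [tauD, map_natCast, ZMod.natCast_eq_zero_iff]
  exact dvd_mul_right _ _

lemma norm_hlift (hn : Odd n) (h2 : 2 ≤ n) (hj : 1 ≤ j) {a b : ZMod (n^j)} (t : ZMod n)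
    (hab : a^2 + b^2 = 1) :
    (hlift n j a b t).1^2 + (hlift n j a b t).2^2 = 1 := by
  obtain ⟨D, hD⟩ := eqN_of_pi_eq_zero h2 _ (pi_E_eq_zero h2 hab)
  obtain ⟨s, hs⟩ : ∃ s, tauD n j t = ((n^j : ℕ) : ZMod (n^(j+1))) * s :=
    ⟨(t.val : ZMod (n^(j+1))), by rw [tauD, Nat.cast_mul]⟩
  have hnn := hNN (n := n) hj
  set X := (a.val : ZMod (n^(j+1)))
  set Y := (b.val : ZMod (n^(j+1)))
  have hEE : (X^2+Y^2-1)*(X^2+Y^2-1) = 0 := by rw [hD]; linear_combination D*D*hnn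
  have hττ : tauD n j t * tauD n j t = 0 := by rw [hs]; linear_combination s*s*hnn
  have h2u := hu (j := j) hn
  simp only [hlift, Xl, Yl]
  set u := Ring.inverse (2 : ZMod (n^(j+1)))
  set τ := tauD n j t
  linear_combination ((1-u*(X^2+Y^2-1))^2*(X^2+Y^2)) * hττ +
    (u^2*(X^2+Y^2) - 2*u) * hEE - (X^2+Y^2-1) * h2u

lemma pi_Xl (h2 : 2 ≤ n) {a b : ZMod (n^j)} (hab : a^2 + b^2 = 1) :
    piM n j (Xl n j a b) = a := by
  rw [Xl, map_mul, map_sub, map_one, map_mul, pi_E_eq_zero h2 hab, mul_zero, sub_zero, one_mul,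
    pi_vcast h2]

lemma pi_Yl (h2 : 2 ≤ n) {a b : ZMod (n^j)} (hab : a^2 + b^2 = 1) :
    piM n j (Yl n j a b) = b := by
  rw [Yl, map_mul, map_sub, map_one, map_mul, pi_E_eq_zero h2 hab, mul_zero, sub_zero, one_mul,
    pi_vcast h2]

lemma pi_hlift₁ (h2 : 2 ≤ n) {a b : ZMod (n^j)} (t : ZMod n) (hab : a^2 + b^2 = 1) :
    piM n j (hlift n j a b t).1 = a := by
  rw [hlift, map_sub, map_mul, pi_tauD h2, zero_mul, sub_zero, pi_Xl h2 hab]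

lemma pi_hlift₂ (h2 : 2 ≤ n) {a b : ZMod (n^j)} (t : ZMod n) (hab : a^2 + b^2 = 1) :
    piM n j (hlift n j a b t).2 = b := by
  rw [hlift, map_add, map_mul, pi_tauD h2, zero_mul, add_zero, pi_Yl h2 hab]

lemma norm_XlYl (hn : Odd n) (h2 : 2 ≤ n) (hj : 1 ≤ j) {a b : ZMod (n^j)}
    (hab : a^2 + b^2 = 1) : (Xl n j a b)^2 + (Yl n j a b)^2 = 1 := by
  have := norm_hlift hn h2 hj (a := a) (b := b) 0 hab
  have ht0 : tauD n j (0 : ZMod n) = 0 := by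
    simp [tauD]
  rw [hlift, ht0] at this
  simpa using this
end Lift

section Lift2
variable {n j : ℕ}

lemma drop_hlift (hn : Odd n) (h2 : 2 ≤ n) (hj : 1 ≤ j) {a b : ZMod (n^j)} (t : ZMod n)
    (hab : a^2 + b^2 = 1) :
    hdrop n j (hlift n j a b t).1 (hlift n j a b t).2 = ((a, b), t) := by
  haveI : NeZero n := ⟨by omega⟩
  haveI : NeZero (n^(j+1)) := neZeroM h2
  have hπ1 := pi_hlift₁ h2 t hab
  have hπ2 := pi_hlift₂ h2 t hab
  have hnorm := norm_XlYl hn h2 hj hab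
  have hd : (hlift n j a b t).2 * Xl n j a b - (hlift n j a b t).1 * Yl n j a b
      = tauD n j t := by
    simp only [hlift]
    linear_combination (tauD n j t) * hnorm
  rw [hdrop, hπ1, hπ2, hd]
  have hval : (tauD n j t).val = n^j * t.val := by
    rw [tauD, ZMod.val_natCast, Nat.mod_eq_of_lt]
    have hlt : t.val < n := ZMod.val_lt t
    have hp : 0 < n^j := pow_pos (show 0 < n by omega) j
    calc n^j * t.val < n^j * n := mul_lt_mul_of_pos_left hlt hp
      _ = n^(j+1) := by rw [pow_succ]
  rw [hval, Nat.mul_div_cancel_left _ (pow_pos (show 0 < n by omega) j)]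
  simp only [Prod.mk.injEq, true_and, and_true, eq_self_iff_true]
  exact ZMod.natCast_rightInverse t

lemma hlift_drop (hn : Odd n) (h2 : 2 ≤ n) (hj : 1 ≤ j) {x y : ZMod (n^(j+1))}
    (hxy : x^2 + y^2 = 1) :
    hlift n j (hdrop n j x y).1.1 (hdrop n j x y).1.2 (hdrop n j x y).2 = (x, y) := by
  haveI : NeZero n := ⟨by omega⟩
  haveI : NeZero (n^(j+1)) := neZeroM h2
  set a := piM n j x with ha
  set b := piM n j y with hb
  have hab : a^2 + b^2 = 1 := by
    rw [ha, hb, ← map_pow, ← map_pow, ← map_add, hxy, map_one]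
  have hnorm := norm_XlYl hn h2 hj hab
  set X := Xl n j a b
  set Y := Yl n j a b
  have hπX : piM n j X = a := pi_Xl h2 hab
  have hπY : piM n j Y = b := pi_Yl h2 hab
  -- c and d
  have hπc : piM n j (x * X + y * Y) = 1 := by
    rw [map_add, map_mul, map_mul, hπX, hπY, ← ha, ← hb, ← hab]; ring
  have hπd : piM n j (y * X - x * Y) = 0 := by
    rw [map_sub, map_mul, map_mul, hπX, hπY, ← ha, ← hb]; ring
  obtain ⟨α, hα⟩ := eqN_of_pi_eq_zero h2 (x * X + y * Y - 1)
    (by rw [map_sub, hπc, map_one, sub_self])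
  obtain ⟨β, hβ⟩ := eqN_of_pi_eq_zero h2 _ hπd
  have hcd : (x * X + y * Y)^2 + (y * X - x * Y)^2 = 1 := by
    linear_combination (X^2+Y^2) * hxy + hnorm
  have hnn := hNN (n := n) hj
  have h2u := hu (j := j) hn
  have h2Nα : 2 * (((n^j : ℕ) : ZMod (n^(j+1))) * α) = 0 := by
    have hc' : x * X + y * Y = 1 + ((n^j : ℕ) : ZMod (n^(j+1))) * α := by
      linear_combination hα
    rw [hc', hβ] at hcd
    linear_combination hcd - (α^2 + β^2) * hnn
  have hNα : ((n^j : ℕ) : ZMod (n^(j+1))) * α = 0 := by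
    linear_combination (Ring.inverse (2 : ZMod (n^(j+1)))) * h2Nα
      - (((n^j : ℕ) : ZMod (n^(j+1))) * α) * h2u
  have hc1 : x * X + y * Y = 1 := by
    have := hα
    rw [hNα] at this
    linear_combination this
  -- τ reconstruction
  have hdvd : (n^j : ℕ) ∣ (y * X - x * Y).val := dvd_val_of_pi_eq_zero h2 _ hπd
  have hτd : tauD n j ((((y * X - x * Y).val / n^j : ℕ)) : ZMod n) = y * X - x * Y := by
    rw [tauD, ZMod.val_natCast]
    set A := (y * X - x * Y).val / n^j with hA
    have hAval : (y * X - x * Y).val = n^j * A := (Nat.mul_div_cancel' hdvd).symm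
    have hmod : n^j * (A % n) ≡ n^j * A [MOD n^j * n] := (Nat.mod_modEq A n).mul_left' _
    have : ((n^j * (A % n) : ℕ) : ZMod (n^(j+1))) = ((n^j * A : ℕ) : ZMod (n^(j+1))) := by
      rw [ZMod.natCast_eq_natCast_iff]
      rw [pow_succ]
      exact hmod
    rw [this, ← hAval]
    exact ZMod.natCast_rightInverse _
  show (Xl n j a b - tauD n j _ * Yl n j a b, Yl n j a b + tauD n j _ * Xl n j a b) = (x, y)
  rw [show (hdrop n j x y).2 = (((y * X - x * Y).val / n^j : ℕ) : ZMod n) from rfl, hτd]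
  have e1 : X - (y * X - x * Y) * Y = x := by
    linear_combination x * hnorm - X * hc1
  have e2 : Y + (y * X - x * Y) * X = y := by
    linear_combination y * hnorm - Y * hc1
  rw [Prod.mk.injEq]
  constructor
  · linear_combination e1
  · linear_combination e2
end Lift2

lemma gPhi_succ {n j : ℕ} (hn : Odd n) (h2 : 2 ≤ n) (hj : 1 ≤ j) :
    gPhi (n^(j+1)) = n * gPhi (n^j) := by
  haveI : NeZero n := ⟨by omega⟩
  rw [gPhi, gPhi]
  have key : Nat.card {x : ZMod (n^(j+1)) × ZMod (n^(j+1)) // x.1^2 + x.2^2 = 1}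
      = Nat.card ({x : ZMod (n^j) × ZMod (n^j) // x.1^2 + x.2^2 = 1} × ZMod n) := by
    apply Nat.card_congr
    refine ⟨fun q => (⟨(hdrop n j q.1.1 q.1.2).1, ?_⟩, (hdrop n j q.1.1 q.1.2).2),
            fun p => ⟨hlift n j p.1.1.1 p.1.1.2 p.2, norm_hlift hn h2 hj p.2 p.1.2⟩, ?_, ?_⟩
    · show (piM n j q.1.1)^2 + (piM n j q.1.2)^2 = 1
      rw [← map_pow, ← map_pow, ← map_add, q.2, map_one]
    · rintro ⟨⟨x, y⟩, hq⟩
      have := hlift_drop hn h2 hj hq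
      apply Subtype.ext
      exact this
    · rintro ⟨⟨⟨a, b⟩, hp⟩, t⟩
      have := drop_hlift hn h2 hj t hp
      have h1 : ((hdrop n j (hlift n j a b t).1 (hlift n j a b t).2).1) = (a, b) :=
        congrArg Prod.fst this
      have h2' : ((hdrop n j (hlift n j a b t).1 (hlift n j a b t).2).2) = t :=
        congrArg Prod.snd this
      simp only [Prod.mk.injEq]
      exact ⟨Subtype.ext h1, h2'⟩
  rw [key, Nat.card_prod, Nat.card_zmod]
  ring

lemma gPhi_odd_pow {n : ℕ} (hn : Odd n) (m : ℕ) (hm : 1 ≤ m) :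
    gPhi (n^m) = n^(m-1) * gPhi n := by
  rcases eq_or_lt_of_le (show 1 ≤ n from hn.pos) with h1 | h2
  · have hn1 : n = 1 := h1.symm
    subst hn1
    simp
  · obtain ⟨k, rfl⟩ : ∃ k, m = k + 1 := ⟨m - 1, by omega⟩
    induction k with
    | zero => simp
    | succ i ih =>
      rw [gPhi_succ hn h2 (by omega), ih (by omega)]
      have : i + 1 + 1 - 1 = (i + 1 - 1) + 1 := by omega
      rw [this, pow_succ]
      ring

lemma exists_sqrt_two_pow (k : ℕ) (hk : 3 ≤ k) :
    ∀ c : ℤ, c % 8 = 1 → ∃ y : ℤ, y % 2 = 1 ∧ (2:ℤ)^k ∣ y^2 - c := by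
  induction k, hk using Nat.le_induction with
  | base =>
    intro c hc
    refine ⟨1, rfl, ?_⟩
    have h8 : (2:ℤ)^3 = 8 := by norm_num
    rw [h8]
    omega
  | succ k hk ih =>
    intro c hc
    obtain ⟨y, hyodd, q, hq⟩ := ih c hc
    obtain ⟨m, rfl⟩ : ∃ m, k = m + 3 := ⟨k - 3, by omega⟩
    rcases Int.even_or_odd q with ⟨r, hr⟩ | ⟨r, hr⟩
    · exact ⟨y, hyodd, ⟨r, by rw [hq, hr]; ring⟩⟩
    · refine ⟨y + 2^(m+2), ?_, ?_⟩
      · have h2 : (2:ℤ)^(m+2) = 2 * 2^(m+1) := by ring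
        omega
      · obtain ⟨s, hs⟩ : ∃ s : ℤ, q + y = 2 * s := ⟨(q + y)/2, by omega⟩
        exact ⟨s + 2^m, by linear_combination hq + (2:ℤ)^(m+3) * hs⟩

lemma sq_eq_one_cases (m : ℕ) (z : ZMod (2^(m+3))) (hz : z^2 = 1) :
    z = 1 ∨ z = -1 ∨ z = 1 + ((2^(m+2) : ℕ) : ZMod (2^(m+3)))
      ∨ z = -1 + ((2^(m+2) : ℕ) : ZMod (2^(m+3))) := by
  haveI : NeZero (2^(m+3)) := ⟨(pow_pos (by norm_num) _).ne'⟩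
  have hzv : ((z.val : ℕ) : ZMod (2^(m+3))) = z := ZMod.natCast_rightInverse z
  have hunit : IsUnit z := IsUnit.of_mul_eq_one (a := z) z (by rw [← sq, hz])
  have hcop : Nat.Coprime z.val (2^(m+3)) := by
    rw [← hzv] at hunit
    exact (ZMod.isUnit_iff_coprime z.val (2^(m+3))).1 hunit
  have hvodd : z.val % 2 = 1 := by
    rcases Nat.even_or_odd z.val with ⟨w, hw⟩ | ⟨w, hw⟩
    · exfalso
      have h2 : (2 : ℕ) ∣ Nat.gcd z.val (2^(m+3)) :=
        Nat.dvd_gcd ⟨w, by omega⟩ (dvd_pow_self 2 (by omega))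
      rw [hcop] at h2
      omega
    · omega
  have hmod : z.val^2 % (2^(m+3)) = 1 % (2^(m+3)) := by
    have : ((z.val^2 : ℕ) : ZMod (2^(m+3))) = ((1 : ℕ) : ZMod (2^(m+3))) := by
      push_cast
      rw [hzv, hz]
    exact (ZMod.natCast_eq_natCast_iff _ _ _).1 this
  have hv1 : 1 ≤ z.val := by omega
  have hdvd : 2^(m+3) ∣ z.val^2 - 1 := (Nat.modEq_iff_dvd' (by nlinarith)).1 hmod.symm
  obtain ⟨w, hw⟩ : ∃ w, z.val = 2*w + 1 := ⟨z.val/2, by omega⟩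
  rw [hw] at hdvd
  have hsq : (2*w+1)^2 - 1 = 4 * (w * (w+1)) := by
    have : (2*w+1)^2 = 4*(w*(w+1)) + 1 := by ring
    omega
  rw [hsq] at hdvd
  have hdvd2 : 2^(m+1) ∣ w * (w+1) := by
    have h4 : (2:ℕ)^(m+3) = 4 * 2^(m+1) := by ring
    rw [h4] at hdvd
    exact (mul_dvd_mul_iff_left (by norm_num : (4:ℕ) ≠ 0)).1 hdvd
  have hzero : (2 : ZMod (2^(m+3)))^(m+3) = 0 := by
    have := ZMod.natCast_self (2^(m+3))
    push_cast at this
    exact this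
  rcases Nat.even_or_odd w with ⟨r, hr⟩ | hwodd
  · have hcopw : Nat.Coprime (2^(m+1)) (w+1) :=
      Nat.Coprime.pow_left _ (Nat.coprime_two_left.2 ⟨r, by omega⟩)
    obtain ⟨c, hc⟩ := hcopw.dvd_of_dvd_mul_right hdvd2
    have hvc : z.val = 2^(m+2)*c + 1 := by
      have hr2 : 2^(m+2)*c = 2*(2^(m+1)*c) := by ring
      omega
    rcases Nat.even_or_odd c with ⟨e, he⟩ | ⟨e, he⟩
    · left
      rw [← hzv, hvc, he]
      push_cast
      linear_combination (e : ZMod (2^(m+3))) * hzero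
    · right; right; left
      rw [← hzv, hvc, he]
      push_cast
      linear_combination (e : ZMod (2^(m+3))) * hzero
  · have hcopw : Nat.Coprime (2^(m+1)) w :=
      Nat.Coprime.pow_left _ (Nat.coprime_two_left.2 hwodd)
    have hdvd2' : 2^(m+1) ∣ (w+1) * w := by rwa [mul_comm] at hdvd2
    obtain ⟨c, hc⟩ := hcopw.dvd_of_dvd_mul_right hdvd2'
    have hvc : z.val + 1 = 2^(m+2)*c := by
      have : 2^(m+2)*c = 2*(2^(m+1)*c) := by ring
      omega
    have hcast : z + 1 = (2 : ZMod (2^(m+3)))^(m+2) * (c : ZMod (2^(m+3))) := by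
      have h := congrArg (fun t : ℕ => (t : ZMod (2^(m+3)))) hvc
      push_cast at h
      rw [hzv] at h
      linear_combination h
    rcases Nat.even_or_odd c with ⟨e, he⟩ | ⟨e, he⟩
    · right; left
      rw [he] at hcast
      push_cast at hcast
      linear_combination hcast + (e : ZMod (2^(m+3))) * hzero
    · right; right; right
      rw [he] at hcast
      push_cast at hcast ⊢
      linear_combination hcast + (e : ZMod (2^(m+3))) * hzero

lemma natCast_ne_zero_two_pow (m : ℕ) (a : ℕ) (ha : 0 < a) (hlt : a < 2^(m+3)) :
    ((a : ℕ) : ZMod (2^(m+3))) ≠ 0 := by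
  intro h
  rw [ZMod.natCast_eq_zero_iff] at h
  have := Nat.le_of_dvd ha h
  omega

lemma card_sq_one (m : ℕ) : Nat.card {z : ZMod (2^(m+3)) // z^2 = 1} = 4 := by
  have hp2 : 4 ≤ 2^(m+2) := by
    calc (4:ℕ) = 2^2 := rfl
    _ ≤ 2^(m+2) := Nat.pow_le_pow_right (by norm_num) (by omega)
  have hp3 : (2:ℕ)^(m+3) = 2*2^(m+2) := by ring
  have hzero : (2 : ZMod (2^(m+3)))^(m+3) = 0 := by
    have := ZMod.natCast_self (2^(m+3))
    push_cast at this
    exact this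
  set h : ZMod (2^(m+3)) := ((2^(m+2) : ℕ) : ZMod (2^(m+3))) with hh
  have hpush : h = (2 : ZMod (2^(m+3)))^(m+2) := by rw [hh]; push_cast; ring
  -- distinctness
  have d1 : (1 : ZMod (2^(m+3))) ≠ -1 := by
    intro he
    refine natCast_ne_zero_two_pow m 2 (by norm_num) (by omega) ?_
    push_cast
    linear_combination he
  have d2 : (1 : ZMod (2^(m+3))) ≠ 1 + h := by
    intro he
    refine natCast_ne_zero_two_pow m (2^(m+2)) (by omega) (by omega) ?_
    rw [← hh]
    linear_combination -he
  have d3 : (1 : ZMod (2^(m+3))) ≠ -1 + h := by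
    intro he
    refine natCast_ne_zero_two_pow m (2^(m+2) - 2) (by omega) (by omega) ?_
    rw [Nat.cast_sub (by omega), ← hh]
    push_cast
    linear_combination -he
  have d4 : (-1 : ZMod (2^(m+3))) ≠ 1 + h := by
    intro he
    refine natCast_ne_zero_two_pow m (2^(m+2) + 2) (by omega) (by omega) ?_
    push_cast
    rw [← hpush]
    linear_combination -he
  have d5 : (-1 : ZMod (2^(m+3))) ≠ -1 + h := by
    intro he
    exact d2 (by linear_combination he)
  have d6 : (1 + h : ZMod (2^(m+3))) ≠ -1 + h := by
    intro he
    exact d1 (by linear_combination he)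
  -- the iff
  have hiff : ∀ z : ZMod (2^(m+3)), z^2 = 1 ↔ z ∈ ({1, -1, 1+h, -1+h} : Finset _) := by
    intro z
    constructor
    · intro hz
      rcases sq_eq_one_cases m z hz with h1 | h1 | h1 | h1 <;>
        simp [h1, hh]
    · intro hz
      simp only [Finset.mem_insert, Finset.mem_singleton] at hz
      rcases hz with rfl | rfl | rfl | rfl
      · norm_num
      · norm_num
      · rw [hpush]
        linear_combination (1 + (2 : ZMod (2^(m+3)))^(m+1)) * hzero
      · rw [hpush]
        linear_combination ((2 : ZMod (2^(m+3)))^(m+1) - 1) * hzero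
  rw [Nat.card_eq_fintype_card, Fintype.card_subtype]
  have : Finset.filter (fun z : ZMod (2^(m+3)) => z^2 = 1) Finset.univ
      = ({1, -1, 1+h, -1+h} : Finset _) := by
    ext z
    simp [hiff z]
  rw [this]
  rw [Finset.card_insert_of_notMem (by simp only [Finset.mem_insert, Finset.mem_singleton]; push_neg; exact ⟨d1, d2, d3⟩),
      Finset.card_insert_of_notMem (by simp only [Finset.mem_insert, Finset.mem_singleton]; push_neg; exact ⟨d4, d5⟩),
      Finset.card_insert_of_notMem (by simp only [Finset.mem_singleton]; exact d6),
      Finset.card_singleton]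

-- the mod-2 character
noncomputable def chi2 (m : ℕ) : ZMod (2^(m+3)) →+* ZMod 2 :=
  ZMod.castHom (show (2:ℕ) ∣ 2^(m+3) from ⟨2^(m+2), by ring⟩) (ZMod 2)

lemma chi2_eq (m : ℕ) (x : ZMod (2^(m+3))) : chi2 m x = ((x.val : ℕ) : ZMod 2) := by
  haveI : NeZero (2^(m+3)) := ⟨(pow_pos (by norm_num) _).ne'⟩
  rw [chi2, ZMod.castHom_apply, ← ZMod.natCast_val]

lemma chi2_eq_zero_iff (m : ℕ) (x : ZMod (2^(m+3))) : chi2 m x = 0 ↔ 2 ∣ x.val := by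
  rw [chi2_eq, ZMod.natCast_eq_zero_iff]

-- empty fiber when x ≡ 2 mod 4
lemma fiber_empty (m : ℕ) (x : ZMod (2^(m+3))) (hx : x.val % 4 = 2) :
    IsEmpty {y : ZMod (2^(m+3)) // x^2 + y^2 = 1} := by
  haveI : NeZero (2^(m+3)) := ⟨(pow_pos (by norm_num) _).ne'⟩
  constructor
  rintro ⟨y, hy⟩
  have hdec : ∀ u v : ZMod 8, u.val % 4 = 2 → u^2 + v^2 ≠ 1 := by decide
  set ψ : ZMod (2^(m+3)) →+* ZMod 8 := ZMod.castHom (show (8:ℕ) ∣ 2^(m+3) from ⟨2^m, by ring⟩) (ZMod 8) with hψ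
  have h8 : ψ x ^ 2 + ψ y ^ 2 = 1 := by
    rw [← map_pow, ← map_pow, ← map_add, hy, map_one]
  have hval : (ψ x).val % 4 = 2 := by
    have h1 : ψ x = ((x.val : ℕ) : ZMod 8) := by
      rw [hψ, ZMod.castHom_apply, ← ZMod.natCast_val]
    rw [h1, ZMod.val_natCast]
    omega
  exact hdec _ _ hval h8

-- fiber has 4 elements when 4 ∣ x.val
lemma fiber_four (m : ℕ) (x : ZMod (2^(m+3))) (hx : 4 ∣ x.val) :
    Nat.card {y : ZMod (2^(m+3)) // x^2 + y^2 = 1} = 4 := by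
  haveI : NeZero (2^(m+3)) := ⟨(pow_pos (by norm_num) _).ne'⟩
  obtain ⟨w, hw⟩ := hx
  have hc8 : (1 - (x.val : ℤ)^2) % 8 = 1 := by
    have hwz : (x.val : ℤ) = 4 * (w : ℤ) := by exact_mod_cast hw
    rw [hwz]
    have : (4 * (w:ℤ))^2 = 16 * (w*w) := by ring
    rw [this]
    omega
  obtain ⟨y, hyodd, hdvd⟩ := exists_sqrt_two_pow (m+3) (by omega) _ hc8
  set y0 : ZMod (2^(m+3)) := ((y : ℤ) : ZMod (2^(m+3))) with hy0def
  have hy0 : y0^2 = 1 - x^2 := by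
    have h0 : ((y^2 - (1 - (x.val:ℤ)^2) : ℤ) : ZMod (2^(m+3))) = 0 := by
      rw [ZMod.intCast_zmod_eq_zero_iff_dvd]
      exact_mod_cast hdvd
    push_cast at h0
    rw [ZMod.natCast_rightInverse x] at h0
    rw [hy0def]
    linear_combination h0
  -- y0 is a unit
  have hχ : chi2 m y0 = 1 := by
    rw [hy0def, map_intCast]
    obtain ⟨s, hs⟩ : ∃ s : ℤ, y = 2*s + 1 := ⟨y/2, by omega⟩
    rw [hs]
    push_cast
    have h20 : (2 : ZMod 2) = 0 := rfl
    linear_combination (s : ZMod 2) * h20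
  have hvodd : ¬ 2 ∣ y0.val := by
    intro h2
    rw [← chi2_eq_zero_iff m y0] at h2
    rw [hχ] at h2
    exact one_ne_zero h2
  have hunit : IsUnit y0 := by
    rw [show y0 = ((y0.val : ℕ) : ZMod (2^(m+3))) from (ZMod.natCast_rightInverse y0).symm,
      ZMod.isUnit_iff_coprime]
    exact Nat.Coprime.pow_right _ (Nat.coprime_two_right.2 (Nat.odd_iff.2 (by omega)))
  obtain ⟨U, hU⟩ := hunit
  -- the two equivalences
  have e1 : {y' : ZMod (2^(m+3)) // x^2 + y'^2 = 1} ≃ {y' : ZMod (2^(m+3)) // y'^2 = y0^2} :=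
    Equiv.subtypeEquivRight (fun y' => by
      constructor
      · intro h; rw [hy0]; linear_combination h
      · intro h; rw [hy0] at h; linear_combination h)
  have e2 : {y' : ZMod (2^(m+3)) // y'^2 = y0^2} ≃ {z : ZMod (2^(m+3)) // z^2 = 1} := by
    refine ⟨fun w' => ⟨w'.1 * ↑U⁻¹, ?_⟩, fun z => ⟨z.1 * ↑U, ?_⟩, ?_, ?_⟩
    · rw [mul_pow, w'.2, ← hU, ← mul_pow, Units.mul_inv, one_pow]
    · rw [mul_pow, z.2, one_mul, hU]
    · rintro ⟨w', hw'⟩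
      apply Subtype.ext
      simp
    · rintro ⟨z, hz⟩
      apply Subtype.ext
      simp
  rw [Nat.card_congr (e1.trans e2), card_sq_one]

-- per-x count including the parity condition
lemma fiber_count (m : ℕ) (x : ZMod (2^(m+3))) :
    Nat.card {y : ZMod (2^(m+3)) // x^2 + y^2 = 1 ∧ chi2 m x = 0}
      = if 4 ∣ x.val then 4 else 0 := by
  by_cases h4 : 4 ∣ x.val
  · rw [if_pos h4]
    have hχ : chi2 m x = 0 := (chi2_eq_zero_iff m x).2 (dvd_trans (by norm_num) h4)
    rw [Nat.card_congr (Equiv.subtypeEquivRight (fun y => and_iff_left hχ))]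
    exact fiber_four m x h4
  · rw [if_neg h4]
    have : IsEmpty {y : ZMod (2^(m+3)) // x^2 + y^2 = 1 ∧ chi2 m x = 0} := by
      constructor
      rintro ⟨y, hy, hχ⟩
      have h2 : 2 ∣ x.val := (chi2_eq_zero_iff m x).1 hχ
      have hx42 : x.val % 4 = 2 := by omega
      exact (fiber_empty m x hx42).false ⟨y, hy⟩
    exact Nat.card_of_isEmpty

lemma card_dvd4 (m : ℕ) :
    Nat.card {x : ZMod (2^(m+3)) // 4 ∣ x.val} = 2^(m+1) := by
  haveI : NeZero (2^(m+3)) := ⟨(pow_pos (by norm_num) _).ne'⟩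
  haveI : NeZero (2^(m+1)) := ⟨(pow_pos (by norm_num) _).ne'⟩
  have hKL : (2:ℕ)^(m+3) = 4 * 2^(m+1) := by ring
  have e : {x : ZMod (2^(m+3)) // 4 ∣ x.val} ≃ ZMod (2^(m+1)) := by
    refine ⟨fun x => ((x.1.val / 4 : ℕ) : ZMod (2^(m+1))),
            fun t => ⟨((4 * t.val : ℕ) : ZMod (2^(m+3))), ?_⟩, ?_, ?_⟩
    · rw [ZMod.val_natCast, Nat.mod_eq_of_lt (by
        have := ZMod.val_lt t
        omega)]
      exact dvd_mul_right _ _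
    · rintro ⟨x, hx⟩
      apply Subtype.ext
      have hlt : x.val / 4 < 2^(m+1) := by
        have := ZMod.val_lt x
        omega
      simp only
      rw [ZMod.val_natCast, Nat.mod_eq_of_lt hlt, Nat.mul_div_cancel' hx]
      exact ZMod.natCast_rightInverse x
    · intro t
      have hlt : 4 * t.val < 2^(m+3) := by
        have := ZMod.val_lt t
        omega
      simp only
      rw [ZMod.val_natCast, Nat.mod_eq_of_lt hlt, Nat.mul_div_cancel_left _ (by norm_num)]
      exact ZMod.natCast_rightInverse t
  rw [Nat.card_congr e, Nat.card_zmod]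

lemma card_half (m : ℕ) :
    Nat.card {p : ZMod (2^(m+3)) × ZMod (2^(m+3)) // p.1^2 + p.2^2 = 1 ∧ chi2 m p.1 = 0}
      = 2^(m+3) := by
  haveI : NeZero (2^(m+3)) := ⟨(pow_pos (by norm_num) _).ne'⟩
  rw [Nat.card_congr (Equiv.subtypeProdEquivSigmaSubtype
    (fun a b : ZMod (2^(m+3)) => a^2 + b^2 = 1 ∧ chi2 m a = 0))]
  rw [Nat.card_eq_fintype_card, Fintype.card_sigma]
  have hsum : ∀ x : ZMod (2^(m+3)),
      Fintype.card {b : ZMod (2^(m+3)) // x^2 + b^2 = 1 ∧ chi2 m x = 0}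
        = if 4 ∣ x.val then 4 else 0 := by
    intro x
    rw [← Nat.card_eq_fintype_card]
    exact fiber_count m x
  rw [Finset.sum_congr rfl (fun x _ => hsum x)]
  rw [Finset.sum_ite, Finset.sum_const, Finset.sum_const_zero, add_zero, smul_eq_mul]
  have : (Finset.filter (fun x : ZMod (2^(m+3)) => 4 ∣ x.val) Finset.univ).card
      = Nat.card {x : ZMod (2^(m+3)) // 4 ∣ x.val} := by
    rw [Nat.card_eq_fintype_card, Fintype.card_subtype]
  rw [this, card_dvd4]
  ring

lemma gPhi_two_pow_aux (m : ℕ) : gPhi (2^(m+3)) = 2^(m+4) := by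
  haveI : NeZero (2^(m+3)) := ⟨(pow_pos (by norm_num) _).ne'⟩
  rw [gPhi]
  classical
  -- partition by parity of first coordinate
  have e0 : {p : ZMod (2^(m+3)) × ZMod (2^(m+3)) // p.1^2 + p.2^2 = 1}
      ≃ {q : {p : ZMod (2^(m+3)) × ZMod (2^(m+3)) // p.1^2 + p.2^2 = 1} // chi2 m q.1.1 = 0}
        ⊕ {q : {p : ZMod (2^(m+3)) × ZMod (2^(m+3)) // p.1^2 + p.2^2 = 1} // ¬ chi2 m q.1.1 = 0} :=
    (Equiv.sumCompl _).symm
  have e1 : {q : {p : ZMod (2^(m+3)) × ZMod (2^(m+3)) // p.1^2 + p.2^2 = 1} // chi2 m q.1.1 = 0}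
      ≃ {p : ZMod (2^(m+3)) × ZMod (2^(m+3)) // p.1^2 + p.2^2 = 1 ∧ chi2 m p.1 = 0} :=
    Equiv.subtypeSubtypeEquivSubtypeInter
      (fun p : ZMod (2^(m+3)) × ZMod (2^(m+3)) => p.1^2 + p.2^2 = 1)
      (fun p => chi2 m p.1 = 0)
  have hdec : ∀ a b : ZMod 2, a^2 + b^2 = 1 → (¬ a = 0 ↔ b = 0) := by decide
  have e2 : {q : {p : ZMod (2^(m+3)) × ZMod (2^(m+3)) // p.1^2 + p.2^2 = 1} // ¬ chi2 m q.1.1 = 0}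
      ≃ {p : ZMod (2^(m+3)) × ZMod (2^(m+3)) // p.1^2 + p.2^2 = 1 ∧ ¬ chi2 m p.1 = 0} :=
    Equiv.subtypeSubtypeEquivSubtypeInter
      (fun p : ZMod (2^(m+3)) × ZMod (2^(m+3)) => p.1^2 + p.2^2 = 1)
      (fun p => ¬ chi2 m p.1 = 0)
  have e3 : {p : ZMod (2^(m+3)) × ZMod (2^(m+3)) // p.1^2 + p.2^2 = 1 ∧ ¬ chi2 m p.1 = 0}
      ≃ {p : ZMod (2^(m+3)) × ZMod (2^(m+3)) // p.1^2 + p.2^2 = 1 ∧ chi2 m p.2 = 0} :=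
    Equiv.subtypeEquivRight (fun p => by
      constructor
      · rintro ⟨h1, h2⟩
        refine ⟨h1, ?_⟩
        have hc : (chi2 m p.1)^2 + (chi2 m p.2)^2 = 1 := by
          rw [← map_pow, ← map_pow, ← map_add, h1, map_one]
        exact (hdec _ _ hc).1 h2
      · rintro ⟨h1, h2⟩
        refine ⟨h1, ?_⟩
        have hc : (chi2 m p.1)^2 + (chi2 m p.2)^2 = 1 := by
          rw [← map_pow, ← map_pow, ← map_add, h1, map_one]
        exact (hdec _ _ hc).2 h2)
  have e4 : {p : ZMod (2^(m+3)) × ZMod (2^(m+3)) // p.1^2 + p.2^2 = 1 ∧ chi2 m p.2 = 0}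
      ≃ {p : ZMod (2^(m+3)) × ZMod (2^(m+3)) // p.1^2 + p.2^2 = 1 ∧ chi2 m p.1 = 0} := by
    refine ⟨fun p => ⟨(p.1.2, p.1.1), ⟨by linear_combination p.2.1, p.2.2⟩⟩,
            fun p => ⟨(p.1.2, p.1.1), ⟨by linear_combination p.2.1, p.2.2⟩⟩, ?_, ?_⟩
    · rintro ⟨⟨a, b⟩, h⟩; rfl
    · rintro ⟨⟨a, b⟩, h⟩; rfl
  have := Nat.card_congr (e0.trans (Equiv.sumCongr (e1.trans (Equiv.refl _))
    ((e2.trans e3).trans e4)))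
  rw [this, Nat.card_sum, card_half m]
  ring

lemma gPhi_two_pow (k : ℕ) (hk : 2 ≤ k) : gPhi (2^k) = 2^(k+1) := by
  rcases eq_or_lt_of_le hk with h2 | h3
  · rw [← h2]
    rw [show (2:ℕ)^2 = 4 by norm_num, show (2:ℕ)^(2+1) = 8 by norm_num]
    rw [gPhi, Nat.card_eq_fintype_card]
    decide
  · obtain ⟨m, rfl⟩ : ∃ m, k = m + 3 := ⟨k - 3, by omega⟩
    rw [gPhi_two_pow_aux m]

theorem gPhi_pow (n m : ℕ) (hn : 2 ≤ n) (hm : 1 ≤ m) :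
    (n % 4 ≠ 2 → gPhi (n ^ m) = n ^ (m - 1) * gPhi n) ∧
      (n % 4 = 2 → 2 ≤ m → gPhi (n ^ m) = 2 * n ^ (m - 1) * gPhi n) := by
  have gPhi2 : gPhi 2 = 2 := by rw [gPhi, Nat.card_eq_fintype_card]; decide
  rcases Nat.even_or_odd n with hne | hno
  · -- n even
    have hn0 : n ≠ 0 := by omega
    set e := n.factorization 2 with he
    set q := n / 2^e with hq
    have heq : 2^e * q = n := Nat.ordProj_mul_ordCompl_eq_self n 2
    have hq2 : ¬ 2 ∣ q := Nat.not_dvd_ordCompl Nat.prime_two hn0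
    have hqodd : Odd q := Nat.odd_iff.2 (by omega)
    have hc2q : Nat.Coprime 2 q := Nat.coprime_two_left.2 hqodd
    have he1 : 1 ≤ e := by
      have h2n : 2^1 ∣ n := by simpa using (even_iff_two_dvd.1 hne)
      exact (Nat.Prime.pow_dvd_iff_le_factorization Nat.prime_two hn0).1 h2n
    obtain ⟨m', rfl⟩ : ∃ m', m = m' + 1 := ⟨m - 1, by omega⟩
    have hms : m' + 1 - 1 = m' := by omega
    constructor
    · -- n ≡ 0 mod 4
      intro h42
      have h4n : 4 ∣ n := by
        rcases hne with ⟨w, hw⟩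
        omega
      have he2 : 2 ≤ e := by
        have h2n : 2^2 ∣ n := by simpa using h4n
        exact (Nat.Prime.pow_dvd_iff_le_factorization Nat.prime_two hn0).1 h2n
      have hem : 2 ≤ e * (m' + 1) := by
        have : e * 1 ≤ e * (m' + 1) := Nat.mul_le_mul_left e (by omega)
        omega
      rw [← heq, mul_pow, ← pow_mul]
      rw [gPhi_mul _ _ (Nat.Coprime.pow _ _ hc2q), gPhi_mul _ _ (Nat.Coprime.pow_left _ hc2q)]
      rw [gPhi_two_pow _ hem, gPhi_two_pow _ he2]
      rw [gPhi_odd_pow hqodd (m' + 1) (by omega), hms]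
      rw [mul_pow, ← pow_mul]
      have hexp : e * (m' + 1) + 1 = e * m' + (e + 1) := by ring
      rw [hexp, pow_add]
      ring
    · -- n ≡ 2 mod 4
      intro h42 hm2
      have he1' : e = 1 := by
        by_contra hne1
        have he2 : 2 ≤ e := by omega
        have h4n : 2^2 ∣ n :=
          (Nat.Prime.pow_dvd_iff_le_factorization Nat.prime_two hn0).2 he2
        omega
      rw [he1', pow_one] at heq
      rw [← heq, mul_pow, gPhi_mul _ _ (Nat.Coprime.pow _ _ hc2q),
        gPhi_mul _ _ hc2q]
      rw [gPhi_two_pow _ (by omega)]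
      rw [gPhi_odd_pow hqodd (m' + 1) (by omega), hms, gPhi2]
      rw [mul_pow]
      have hexp : m' + 1 + 1 = m' + 2 := by ring
      rw [hexp, pow_add]
      ring
  · -- n odd
    have hodd2 : n % 2 = 1 := Nat.odd_iff.1 hno
    constructor
    · intro _
      exact gPhi_odd_pow hno m hm
    · intro h42 _
      omega
end

section
/- Let p be a prime and z = a + bi a Gaussian integer with gcd(p, a² + b²) = 1. Then the imaginary part of z^{F(p)} is divisible by p, where F(p) = p−1 if p ≡ 1 (mod 4), F(p) = p+1 if p ≡ 3 (mod 4), and F(2) = 2. -/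
/-- The analogue of `n - 1` in the Gaussian setting. -/
def gaussF (n : ℕ) : ℕ :=
  if n % 4 = 1 then n - 1 else if n % 4 = 3 then n + 1 else n

open Zsqrtd in
set_option maxHeartbeats 1000000 in
theorem gaussian_fermat_im (p : ℕ) (hp : p.Prime) (z : GaussianInt)
    (hz : IsCoprime (p : ℤ) (z.re ^ 2 + z.im ^ 2)) :
    (p : ℤ) ∣ (z ^ gaussF p).im := by
  haveI : Fact p.Prime := ⟨hp⟩
  -- case p = 2
  rcases eq_or_ne p 2 with rfl | hp2
  · have : gaussF 2 = 2 := rfl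
    rw [this, pow_two, Zsqrtd.im_mul]
    exact ⟨z.re * z.im, by ring⟩
  have hodd : p % 2 = 1 := hp.eq_two_or_odd.resolve_left hp2
  -- setup quotient ring
  set I : Ideal GaussianInt := Ideal.span {(p : GaussianInt)} with hI
  set R := GaussianInt ⧸ I with hR
  let φ : GaussianInt →+* R := Ideal.Quotient.mk I
  have hker : ∀ w : GaussianInt, φ w = 0 ↔ (p : GaussianInt) ∣ w := by
    intro w; exact Ideal.Quotient.eq_zero_iff_dvd _ _
  have hdvd_int : ∀ n : ℤ, ((p : GaussianInt) ∣ (n : GaussianInt)) ↔ (p : ℤ) ∣ n := by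
    intro n
    rw [show ((p : GaussianInt)) = ((p : ℤ) : GaussianInt) by push_cast; rfl,
      Zsqrtd.intCast_dvd]
    simp
  haveI : CharP R p := by
    constructor
    intro n
    have : ((n : ℕ) : R) = φ ((n : ℤ) : GaussianInt) := by push_cast; rfl
    rw [this, hker, hdvd_int]
    exact_mod_cast Int.natCast_dvd_natCast
  -- Fermat: φ of integer cast to p-th power
  have hint : ∀ n : ℤ, φ ((n : GaussianInt)) ^ p = φ ((n : GaussianInt)) := by
    intro n
    have h1 : (p : ℤ) ∣ n ^ p - n := by
      have := ZMod.pow_card (n : ZMod p)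
      have := (ZMod.intCast_zmod_eq_zero_iff_dvd (n ^ p - n) p).mp (by push_cast; rw [ZMod.pow_card]; ring)
      exact_mod_cast this
    have h2 : (p : GaussianInt) ∣ ((n : GaussianInt) ^ p - n) := by
      rw [show ((n : GaussianInt) ^ p - n) = (((n ^ p - n : ℤ)) : GaussianInt) by push_cast; ring]
      exact (hdvd_int _).mpr h1
    have := (hker _).mpr h2
    rw [map_sub, map_pow, sub_eq_zero] at this
    exact this
  -- i^2 = -1
  have hi2 : (sqrtd : GaussianInt) ^ 2 = -1 := by
    rw [pow_two, Zsqrtd.dmuld]; rfl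
  -- decomposition z = re + i * im
  have hz_dec : z = (z.re : GaussianInt) + sqrtd * (z.im : GaussianInt) := by
    conv_lhs => rw [show z = (⟨z.re, z.im⟩ : GaussianInt) by rfl]
    exact Zsqrtd.decompose
  -- Frobenius on φ z
  have hfrob : φ z ^ p = φ (z.re : GaussianInt) + φ sqrtd ^ p * φ (z.im : GaussianInt) := by
    conv_lhs => rw [hz_dec]
    rw [map_add, map_mul, add_pow_char, mul_pow, hint, hint]
  -- value of i^p depending on p mod 4
  rcases (by omega : p % 4 = 1 ∨ p % 4 = 3) with h4 | h4
  · -- p ≡ 1 mod 4 : i^p = i, so z^p ≡ z, and z invertible gives z^(p-1) ≡ 1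
    obtain ⟨m, hm⟩ : ∃ m, p = 4 * m + 1 := ⟨p / 4, by omega⟩
    have hip : (sqrtd : GaussianInt) ^ p = sqrtd := by
      rw [hm, pow_succ, pow_mul, show (4 : ℕ) = 2 * 2 by rfl, pow_mul, hi2]
      simp
    have hzp : φ z ^ p = φ z := by
      rw [hfrob, ← map_pow, hip, ← map_mul, ← map_add, ← hz_dec]
    -- invertibility of φ z
    obtain ⟨u, v, huv⟩ := hz
    have hinv : φ z * φ ((v : GaussianInt) * star z) = 1 := by
      have hzsz : z * star z = ((z.re ^ 2 + z.im ^ 2 : ℤ) : GaussianInt) := by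
        ext <;> simp [Zsqrtd.re_mul, Zsqrtd.im_mul, pow_two, Zsqrtd.re_intCast, Zsqrtd.im_intCast] <;> ring
      have hzvz : z * ((v : GaussianInt) * star z) - 1
          = ((v * (z.re ^ 2 + z.im ^ 2) - 1 : ℤ) : GaussianInt) := by
        rw [show z * ((v : GaussianInt) * star z) = (v : GaussianInt) * (z * star z) by ring, hzsz]
        push_cast
        ring
      have hd : (p : GaussianInt) ∣ z * ((v : GaussianInt) * star z) - 1 := by
        rw [hzvz]
        exact (hdvd_int _).mpr ⟨-u, by linarith [huv]⟩
      have := (hker _).mpr hd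
      rw [map_sub, map_mul, map_one, sub_eq_zero] at this
      exact this
    have hfin : φ z ^ (p - 1) = 1 := by
      have hp1 : p - 1 + 1 = p := Nat.succ_pred_eq_of_pos hp.pos
      calc φ z ^ (p - 1) = φ z ^ (p - 1) * (φ z * φ ((v : GaussianInt) * star z)) := by
            rw [hinv, mul_one]
        _ = (φ z ^ (p - 1) * φ z) * φ ((v : GaussianInt) * star z) := (mul_assoc _ _ _).symm
        _ = φ z ^ p * φ ((v : GaussianInt) * star z) := by rw [← pow_succ, hp1]
        _ = φ z * φ ((v : GaussianInt) * star z) := by rw [hzp]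
        _ = 1 := hinv
    have : (p : GaussianInt) ∣ z ^ (p - 1) - 1 := by
      rw [← hker, map_sub, map_pow, map_one, sub_eq_zero, hfin]
    rw [show ((p : ℕ) : GaussianInt) = ((p : ℤ) : GaussianInt) by push_cast; rfl,
      Zsqrtd.intCast_dvd] at this
    have him := this.2
    simp only [Zsqrtd.im_sub, Zsqrtd.im_one, sub_zero] at him
    simpa [gaussF, h4] using him
  · -- p ≡ 3 mod 4 : i^p = -i, so z^p ≡ star z, z^(p+1) ≡ norm (real)
    obtain ⟨m, hm⟩ : ∃ m, p = 4 * m + 3 := ⟨p / 4, by omega⟩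
    have hip : (sqrtd : GaussianInt) ^ p = -sqrtd := by
      rw [hm, show 4 * m + 3 = 2 * (2 * m + 1) + 1 by ring, pow_succ, pow_mul, hi2]
      rw [pow_succ, pow_mul]
      simp
    have hzp : φ z ^ p = φ (star z) := by
      rw [hfrob, ← map_pow, hip]
      have : star z = (z.re : GaussianInt) + (-sqrtd) * (z.im : GaussianInt) := by
        ext <;> simp
      rw [this, map_add, map_mul]
    have hzp1 : φ z ^ (p + 1) = φ (star z * z) := by
      rw [pow_succ, hzp, map_mul]
    have : (p : GaussianInt) ∣ z ^ (p + 1) - star z * z := by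
      rw [← hker, map_sub, map_pow, sub_eq_zero, hzp1]
    rw [show ((p : ℕ) : GaussianInt) = ((p : ℤ) : GaussianInt) by push_cast; rfl,
      Zsqrtd.intCast_dvd] at this
    have him := this.2
    have : (star z * z).im = 0 := by simp [Zsqrtd.im_mul]; ring
    rw [Zsqrtd.im_sub, this, sub_zero] at him
    simpa [gaussF, h4, show ¬ (p % 4 = 1) by omega] using him
end

section
/- An odd Gaussian Carmichael number is square-free. -/
/-- `n` is a Gaussian Carmichael number: a composite number that is a Gaussian
Fermat pseudoprime to every base `z` with `gcd(n, z * conj z) = 1`. -/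
def GaussCarmichael (n : ℕ) : Prop :=
  1 < n ∧ ¬ n.Prime ∧ ∀ z : GaussianInt, IsCoprime (n : ℤ) (Zsqrtd.norm z) →
    (n : GaussianInt) ∣ z ^ gaussF n - (star z) ^ gaussF n

lemma gauss_aux_pow {R : Type*} [CommRing R] (w : R) (F : ℕ) :
    w ^ 2 ∣ (1 + w) ^ F - (1 + (F : R) * w) := by
  induction F with
  | zero => simp
  | succ F ih =>
    have key : (1 + w) ^ (F + 1) - (1 + ((F + 1 : ℕ) : R) * w) =
        ((1 + w) ^ F - (1 + (F : R) * w)) * (1 + w) + (F : R) * w ^ 2 := by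
      push_cast; ring
    rw [key]
    exact dvd_add (ih.mul_right _) (dvd_mul_left _ _)

lemma gauss_aux_pow' {R : Type*} [CommRing R] (w : R) (F : ℕ) :
    w ^ 2 ∣ (1 + w) ^ F - (1 - w) ^ F - 2 * (F : R) * w := by
  have h1 := gauss_aux_pow w F
  have h2 := gauss_aux_pow (-w) F
  rw [show (-w) ^ 2 = w ^ 2 by ring] at h2
  have key : (1 + w) ^ F - (1 - w) ^ F - 2 * (F : R) * w =
      ((1 + w) ^ F - (1 + (F : R) * w)) - ((1 + (-w)) ^ F - (1 + (F : R) * (-w))) := by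
    ring_nf
  rw [key]
  exact dvd_sub h1 h2

theorem gaussCarmichael_squarefree (n : ℕ) (ho : Odd n) (h : GaussCarmichael n) :
    Squarefree n := by
  obtain ⟨hn1, -, hC⟩ := h
  have hn0 : n ≠ 0 := by omega
  rw [Nat.squarefree_iff_prime_squarefree]
  rintro p hp ⟨t, ht⟩
  set k := n.factorization p with hk
  set c := n / p ^ k with hc
  have hpc : ¬ p ∣ c := Nat.not_dvd_ordCompl hp hn0
  have hnc : n = p ^ k * c := (Nat.ordProj_mul_ordCompl_eq_self n p).symm
  have hk2 : 2 ≤ k := by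
    rw [hk, ← Nat.Prime.pow_dvd_iff_le_factorization hp hn0]
    exact ⟨t, by rw [ht]; ring⟩
  set m := p * c with hm
  -- every prime dividing n divides m
  have hqm : ∀ q : ℕ, q.Prime → q ∣ n → q ∣ m := by
    intro q hq hqn
    rcases eq_or_ne q p with rfl | hne
    · exact dvd_mul_right _ _
    · rw [hnc] at hqn
      rcases (Nat.Prime.dvd_mul hq).mp hqn with h1 | h1
      · exact absurd (hq.dvd_of_dvd_pow h1)
          (fun hd => hne ((Nat.prime_dvd_prime_iff_eq hq hp).mp hd))
      · exact Dvd.dvd.mul_left h1 p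
  -- the base z = 1 + w, w = m·i
  set w : GaussianInt := ⟨0, (m : ℤ)⟩ with hw
  have hnorm : Zsqrtd.norm (1 + w) = ((1 + m * m : ℕ) : ℤ) := by
    simp [Zsqrtd.norm, hw]
  -- coprimality
  have hcop : Nat.Coprime n (1 + m * m) := by
    by_contra hco
    obtain ⟨q, hq, hqd⟩ := Nat.exists_prime_and_dvd hco
    have h1 : q ∣ n := hqd.trans (Nat.gcd_dvd_left _ _)
    have h2 : q ∣ 1 + m * m := hqd.trans (Nat.gcd_dvd_right _ _)
    have h3 : q ∣ m * m := (hqm q hq h1).mul_right m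
    have : q ∣ 1 := (Nat.dvd_add_right h3).mp (by rwa [add_comm] at h2)
    exact hq.one_lt.ne' (Nat.dvd_one.mp this)
  have hcopz : IsCoprime (n : ℤ) (Zsqrtd.norm (1 + w)) := by
    rw [hnorm, Nat.isCoprime_iff_coprime]; exact hcop
  set F := gaussF n with hF
  have hdvd := hC (1 + w) hcopz
  have hzs : star (1 + w) = 1 - w := by
    ext <;> simp [hw, Zsqrtd.re_star, Zsqrtd.im_star]
  rw [hzs] at hdvd
  -- p^2 divides w^2 and n in GaussianInt
  have hw2 : w ^ 2 = ((-(m * m : ℤ) : ℤ) : GaussianInt) := by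
    ext <;> simp [hw, pow_two, Zsqrtd.re_mul, Zsqrtd.im_mul]
  have hpm : ((p : ℤ) ^ 2 : ℤ) ∣ -((m : ℤ) * m) := by
    have hd : ((p : ℤ) ^ 2 : ℤ) ∣ ((m : ℤ) * m) := ⟨(c : ℤ) * c, by push_cast [hm]; ring⟩
    exact dvd_neg.mpr hd
  have hpw2 : ((p : GaussianInt)) ^ 2 ∣ w ^ 2 := by
    rw [hw2, show ((p : GaussianInt)) ^ 2 = (((p : ℤ) ^ 2 : ℤ) : GaussianInt) by push_cast; ring]
    exact (Zsqrtd.intCast_dvd_intCast _ _).mpr hpm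
  have hpn2 : p ^ 2 ∣ n := ⟨t, by rw [ht]; ring⟩
  have hpn : ((p : GaussianInt)) ^ 2 ∣ (n : GaussianInt) := by
    rw [show ((p : GaussianInt)) ^ 2 = (((p : ℤ) ^ 2 : ℤ) : GaussianInt) by push_cast; ring,
      show ((n : GaussianInt)) = (((n : ℤ) : ℤ) : GaussianInt) by push_cast; ring]
    exact (Zsqrtd.intCast_dvd_intCast _ _).mpr (by exact_mod_cast hpn2)
  -- conclude p^2 ∣ 2 F m in ℤ
  have hkey : ((p : GaussianInt)) ^ 2 ∣ 2 * (F : GaussianInt) * w := by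
    have h1 : ((p : GaussianInt)) ^ 2 ∣ (1 + w) ^ F - (1 - w) ^ F := hpn.trans hdvd
    have h2 := hpw2.trans (gauss_aux_pow' w F)
    have heq : 2 * (F : GaussianInt) * w =
        ((1 + w) ^ F - (1 - w) ^ F) - ((1 + w) ^ F - (1 - w) ^ F - 2 * (F : GaussianInt) * w) := by
      ring
    rw [heq]
    exact dvd_sub h1 h2
  have him : (2 * (F : GaussianInt) * w).im = ((2 * F * m : ℕ) : ℤ) := by
    simp [hw, Zsqrtd.im_mul, Zsqrtd.re_mul]
  have hp2 : ((p : ℤ)) ^ 2 ∣ ((2 * F * m : ℕ) : ℤ) := by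
    have := ((Zsqrtd.intCast_dvd ((p : ℤ) ^ 2) (2 * (F : GaussianInt) * w)).mp
      (by rw [show (((p : ℤ) ^ 2 : ℤ) : GaussianInt) = ((p : GaussianInt)) ^ 2 by push_cast; ring]
          exact hkey)).2
    rwa [him] at this
  have hp2n : p ^ 2 ∣ 2 * F * m := by exact_mod_cast hp2
  -- p is odd and p ∤ F
  have hpn' : p ∣ n := (dvd_mul_right p p).trans ⟨t, ht⟩
  have hpo : p ≠ 2 := by
    rintro rfl
    obtain ⟨s, hs⟩ := hpn'
    have := Nat.odd_iff.mp ho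
    omega
  have hpF : ¬ p ∣ F := by
    intro hd
    have hmod : n % 4 = 1 ∨ n % 4 = 3 := by
      have := Nat.odd_iff.mp ho; omega
    have hone : p ∣ 1 := by
      rcases hmod with hmod | hmod
      · rw [hF, gaussF, if_pos hmod] at hd
        have := Nat.dvd_sub hpn' hd
        rwa [show n - (n - 1) = 1 by omega] at this
      · rw [hF, gaussF, if_neg (by omega), if_pos hmod] at hd
        have := Nat.dvd_sub hd hpn'
        rwa [show n + 1 - n = 1 by omega] at this
    exact hp.one_lt.ne' (Nat.dvd_one.mp hone)
  -- final contradiction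
  have hcp2 : Nat.Coprime p 2 := hp.coprime_iff_not_dvd.mpr
    (fun hd => hpo ((Nat.prime_dvd_prime_iff_eq hp Nat.prime_two).mp hd))
  have hcpF : Nat.Coprime p F := hp.coprime_iff_not_dvd.mpr hpF
  have hcp : Nat.Coprime (p ^ 2) (2 * F) := ((hcp2.mul_right hcpF).pow_left 2)
  have hpm2 : p ^ 2 ∣ m := hcp.dvd_of_dvd_mul_left hp2n
  rw [hm, pow_two] at hpm2
  exact hpc ((mul_dvd_mul_iff_left (a := p) (by exact_mod_cast hp.pos.ne')).mp hpm2)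
end

section
/- Let p < q be odd primes. Then n = pq is a Gaussian Carmichael number if and only if q = p + 2 (twin primes) and 8 divides p + q (equivalently p ≡ 3 (mod 4)). -/
open Zsqrtd

section GaussAux

set_option maxHeartbeats 1000000
set_option synthInstance.maxHeartbeats 400000

private abbrev GI := GaussianInt

private lemma gi_i_pow_one {r : ℕ} (h : r % 4 = 1) : (sqrtd : GI)^r = sqrtd := by
  have h2 : (sqrtd : GI)^4 = 1 := by
    have hm : (sqrtd : GI) * sqrtd = -1 := by rw [Zsqrtd.dmuld]; rfl
    calc (sqrtd : GI)^4 = (sqrtd * sqrtd) * (sqrtd * sqrtd) := by ring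
    _ = 1 := by rw [hm]; ring
  conv_lhs => rw [← Nat.div_add_mod r 4, h, pow_add, pow_mul, h2, one_pow, pow_one, one_mul]

private lemma gi_i_pow_three {r : ℕ} (h : r % 4 = 3) : (sqrtd : GI)^r = -sqrtd := by
  have hm : (sqrtd : GI) * sqrtd = -1 := by rw [Zsqrtd.dmuld]; rfl
  have h2 : (sqrtd : GI)^4 = 1 := by
    calc (sqrtd : GI)^4 = (sqrtd * sqrtd) * (sqrtd * sqrtd) := by ring
    _ = 1 := by rw [hm]; ring
  conv_lhs => rw [← Nat.div_add_mod r 4, h, pow_add, pow_mul, h2, one_pow, one_mul]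
  calc (sqrtd : GI)^3 = (sqrtd*sqrtd)*sqrtd := by ring
  _ = -sqrtd := by rw [hm]; ring

private lemma gi_int_fermat (r : ℕ) [Fact r.Prime] (a : ℤ) : (r:ℤ) ∣ a^r - a := by
  have h : ((a : ZMod r))^r = (a : ZMod r) := ZMod.pow_card _
  exact (ZMod.intCast_zmod_eq_zero_iff_dvd (a^r - a) r).mp (by push_cast [h]; ring)

private lemma gi_frob {r : ℕ} (hr : r.Prime) (hodd : Odd r) (z : GI) :
    (r : GI) ∣ z ^ r - (if r % 4 = 3 then star z else z) := by
  haveI : Fact r.Prime := ⟨hr⟩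
  set I : Ideal GI := Ideal.span {((r:ℕ) : GI)} with hI
  haveI : CharP (GI ⧸ I) r := CharP.quotient GI r (by
    intro hu
    have := Zsqrtd.norm_eq_one_iff.2 hu
    rw [Zsqrtd.norm_natCast] at this
    have : r * r = 1 := by exact_mod_cast this
    nlinarith [hr.two_le])
  set φ := Ideal.Quotient.mk I with hφ
  rw [← Ideal.Quotient.eq_zero_iff_dvd, ← hφ, map_sub, sub_eq_zero]
  have hz : z = (z.re : GI) + sqrtd * (z.im : GI) := by
    nth_rewrite 1 [show z = ⟨z.re, z.im⟩ from rfl]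
    exact_mod_cast Zsqrtd.decompose
  have hsz : star z = (z.re : GI) + sqrtd * ((-z.im : ℤ) : GI) := by
    nth_rewrite 1 [show star z = ⟨z.re, -z.im⟩ from Zsqrtd.star_mk z.re z.im]
    exact_mod_cast Zsqrtd.decompose
  have key : ∀ a : ℤ, (φ ((a:GI)))^r = φ ((a:GI)) := by
    intro a
    have h1 : φ ((a:GI))^r - φ ((a:GI)) = φ (((a^r - a : ℤ) : GI)) := by
      push_cast
      rw [map_sub, map_pow]
    have h0 : φ (((a^r - a : ℤ) : GI)) = 0 := by
      rw [hφ, Ideal.Quotient.eq_zero_iff_dvd]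
      have := (Zsqrtd.intCast_dvd_intCast (d := -1) (r:ℤ) (a^r-a)).mpr (gi_int_fermat r a)
      exact_mod_cast this
    exact sub_eq_zero.mp (h1.trans h0)
  have hpow : φ (z^r) = φ (z.re:GI) + φ ((sqrtd^r : GI)) * φ ((z.im:GI)) := by
    conv_lhs => rw [hz]
    rw [map_pow, map_add, map_mul, add_pow_char, mul_pow, key, key, ← map_pow]
  by_cases h4 : r % 4 = 3
  · simp only [h4, if_pos]
    rw [hpow, gi_i_pow_three h4]
    conv_rhs => rw [hsz]
    rw [map_add, map_mul, map_neg]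
    push_cast
    rw [map_neg]
    ring
  · have h1 : r % 4 = 1 := by rw [Nat.odd_iff] at hodd; omega
    simp only [h4, if_false]
    rw [hpow, gi_i_pow_one h1]
    conv_rhs => rw [hz]
    rw [map_add, map_mul]

private lemma gi_norm_pow_key {r : ℕ} (hr : r.Prime) (h4 : r % 4 = 3) (w : GI) :
    (r : GI) ∣ w^(r+1) - ((w.norm : ℤ) : GI) := by
  have hf := gi_frob hr (by rw [Nat.odd_iff]; omega) w
  rw [if_pos h4] at hf
  have h : w^(r+1) - ((w.norm : ℤ) : GI) = (w^r - star w) * w := by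
    rw [Zsqrtd.norm_eq_mul_conj]
    ring
  rw [h]
  exact hf.mul_right w

private lemma gi_dvd3 {r F : ℕ} (hr : r.Prime) (h4 : r % 4 = 3) (hdvd : (r+1) ∣ F) (z : GI) :
    (r : GI) ∣ z^F - (star z)^F := by
  obtain ⟨k, rfl⟩ := hdvd
  have h1 : (r:GI) ∣ z^((r+1)*k) - ((z.norm:ℤ):GI)^k := by
    rw [pow_mul]
    exact (gi_norm_pow_key hr h4 z).trans (sub_dvd_pow_sub_pow _ _ k)
  have h2 : (r:GI) ∣ (star z)^((r+1)*k) - ((z.norm:ℤ):GI)^k := by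
    rw [pow_mul, ← Zsqrtd.norm_conj z]
    exact (gi_norm_pow_key hr h4 (star z)).trans (sub_dvd_pow_sub_pow _ _ k)
  have := dvd_sub h1 h2
  simpa using this

private lemma gi_unit_pow_key {r : ℕ} (hr : r.Prime) (h4 : r % 4 = 1) (w : GI)
    (hcop : IsCoprime (r:ℤ) w.norm) : (r : GI) ∣ w^(r-1) - 1 := by
  have hf := gi_frob hr (by rw [Nat.odd_iff]; omega) w
  rw [if_neg (by omega)] at hf
  obtain ⟨a, b, hab⟩ := hcop
  have hab' : (a:GI) * (r:ℤ) + (b:GI) * (w * star w) = 1 := by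
    rw [← Zsqrtd.norm_eq_mul_conj]
    exact_mod_cast congrArg (fun t : ℤ => (t : GI)) hab
  have hw : (r:GI) ∣ w * (w^(r-1) - 1) := by
    have h : w * (w^(r-1) - 1) = w^r - w := by
      rw [mul_sub, mul_one, ← pow_succ']
      congr 2
      omega
    rw [h]; exact hf
  have expand : w^(r-1) - 1 =
      ((a:GI) * (r:ℤ)) * (w^(r-1) - 1) + (b:GI) * star w * (w * (w^(r-1)-1)) := by
    have h : w^(r-1) - 1 = ((a:GI) * (r:ℤ) + (b:GI) * (w * star w)) * (w^(r-1) - 1) := by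
      rw [hab', one_mul]
    nth_rewrite 1 [h]; ring
  rw [expand]
  refine dvd_add (Dvd.dvd.mul_right ?_ _) ((hw.mul_left _))
  refine Dvd.dvd.mul_left ?_ _
  norm_cast

private lemma gi_dvd1 {r F : ℕ} (hr : r.Prime) (h4 : r % 4 = 1) (hdvd : (r-1) ∣ F) (z : GI)
    (hcop : IsCoprime (r:ℤ) z.norm) : (r : GI) ∣ z^F - (star z)^F := by
  obtain ⟨k, rfl⟩ := hdvd
  have h1 : (r:GI) ∣ z^((r-1)*k) - 1 := by
    rw [pow_mul]
    have := (gi_unit_pow_key hr h4 z hcop).trans (sub_dvd_pow_sub_pow _ _ k)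
    simpa using this
  have h2 : (r:GI) ∣ (star z)^((r-1)*k) - 1 := by
    rw [pow_mul]
    have hc2 : IsCoprime (r:ℤ) (star z).norm := by rw [Zsqrtd.norm_conj]; exact hcop
    have := (gi_unit_pow_key hr h4 (star z) hc2).trans (sub_dvd_pow_sub_pow _ _ k)
    simpa using this
  have := dvd_sub h1 h2
  simpa using this

private lemma gi_mix {p q : ℕ} (hp : p.Prime) (hq : q.Prime) (hne : p ≠ q) (w : GI) :
    ∃ z : GI, ((p:GI) ∣ z - w) ∧ ((q:GI) ∣ z - 1) := by
  have hcop : IsCoprime ((p:ℕ):ℤ) ((q:ℕ):ℤ) :=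
    Nat.isCoprime_iff_coprime.mpr ((Nat.coprime_primes hp hq).mpr hne)
  have hcop2 : IsCoprime ((p:ℕ):GI) ((q:ℕ):GI) := by
    have := hcop.map (Int.castRingHom GI)
    simpa using this
  obtain ⟨u, v, huv⟩ := hcop2
  exact ⟨w * (v * (q:ℕ)) + u * (p:ℕ), ⟨(1 - w) * u, by linear_combination w * huv⟩,
    ⟨(w - 1) * v, by linear_combination huv⟩⟩

private lemma gi_star_dvd_cong {r : ℤ} {z w : GI} (h : (r:GI) ∣ z - w) :
    (r:GI) ∣ star z - star w := by
  obtain ⟨c, hc⟩ := h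
  exact ⟨star c, by rw [← star_sub, hc, star_mul]; simp [mul_comm]⟩

private lemma gi_norm_cong {r : ℤ} {z w : GI} (h : (r:GI) ∣ z - w) : r ∣ z.norm - w.norm := by
  rw [← Zsqrtd.intCast_dvd_intCast (d := -1)]
  push_cast
  rw [Zsqrtd.norm_eq_mul_conj, Zsqrtd.norm_eq_mul_conj]
  have h2 := gi_star_dvd_cong h
  have e : z * star z - w * star w = z * (star z - star w) + (z - w) * star w := by ring
  rw [e]
  exact dvd_add (h2.mul_left z) (h.mul_right (star w))

private lemma gi_prime_not_dvd_coprime {r : ℕ} (hr : r.Prime) {n : ℤ} (h : ¬ (r:ℤ) ∣ n) :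
    IsCoprime (r:ℤ) n := by
  rw [Int.isCoprime_iff_gcd_eq_one, Int.gcd]
  simp only [Int.natAbs_natCast]
  refine (Nat.Prime.coprime_iff_not_dvd hr).mpr (fun hd => h ?_)
  rwa [Int.natCast_dvd]

private lemma gi_forward1 {p q F : ℕ} (hp : p.Prime) (hq : q.Prime) (hne : p ≠ q)
    (h4 : p % 4 = 1)
    (H : ∀ z : GI, IsCoprime (((p*q : ℕ)) : ℤ) z.norm →
      (((p*q : ℕ)) : GI) ∣ z^F - (star z)^F) : (p-1) ∣ F := by
  haveI : Fact p.Prime := ⟨hp⟩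
  obtain ⟨s, hs⟩ : ∃ s : ZMod p, -1 = s * s :=
    (ZMod.exists_sq_eq_neg_one_iff (p := p)).mpr (by omega)
  have hs' : (s : ZMod p) * s = ((-1 : ℤ) : ZMod p) := by push_cast; exact hs.symm
  set ψ : GI →+* ZMod p := Zsqrtd.lift ⟨s, hs'⟩ with hψ
  have hs2' : (-s : ZMod p) * (-s) = ((-1 : ℤ) : ZMod p) := by
    push_cast; linear_combination hs.symm
  set ψ' : GI →+* ZMod p := Zsqrtd.lift ⟨-s, hs2'⟩ with hψ'
  have hstar : ∀ w : GI, ψ (star w) = ψ' w := by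
    intro w
    rw [hψ, hψ', show star w = ⟨w.re, -w.im⟩ from Zsqrtd.star_mk w.re w.im,
      Zsqrtd.lift_apply_apply, Zsqrtd.lift_apply_apply]
    push_cast
    ring
  obtain ⟨g, hg⟩ := IsCyclic.exists_generator (α := (ZMod p)ˣ)
  set u : ZMod p := ((g : (ZMod p)ˣ) : ZMod p) with hu
  have hu0 : u ≠ 0 := Units.ne_zero g
  have hp2 : (2 : ZMod p) ≠ 0 := by
    have h2 : ((2:ℕ) : ZMod p) ≠ 0 := by
      rw [Ne, ZMod.natCast_eq_zero_iff]
      intro hdvd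
      have := (Nat.prime_dvd_prime_iff_eq hp Nat.prime_two).mp hdvd
      omega
    exact_mod_cast h2
  have hs0 : s ≠ 0 := by
    intro h0
    rw [h0, mul_zero] at hs
    simp at hs
  set a : ZMod p := (u + 1) / 2 with ha
  set b : ZMod p := (u - 1) / (2 * s) with hb
  set z₀ : GI := ⟨(a.val : ℤ), (b.val : ℤ)⟩ with hz₀
  have hcast : ∀ x : ZMod p, (((x.val : ℤ)) : ZMod p) = x := by
    intro x
    push_cast
    exact ZMod.natCast_rightInverse x
  have hψz₀ : ψ z₀ = u := by
    rw [hψ, hz₀, Zsqrtd.lift_apply_apply, hcast, hcast, ha, hb]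
    field_simp
    ring
  have hψ'z₀ : ψ' z₀ = 1 := by
    rw [hψ', hz₀, Zsqrtd.lift_apply_apply, hcast, hcast, ha, hb]
    field_simp
    ring
  obtain ⟨z, hzp, hzq⟩ := gi_mix hp hq hne z₀
  have hψz : ψ z = u := by
    have h0 : ψ (z - z₀) = 0 := by
      obtain ⟨c, hc⟩ := hzp
      rw [hc, map_mul, map_natCast, ZMod.natCast_self, zero_mul]
    rw [map_sub, sub_eq_zero] at h0
    rw [h0, hψz₀]
  have hψ'z : ψ' z = 1 := by
    have h0 : ψ' (z - z₀) = 0 := by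
      obtain ⟨c, hc⟩ := hzp
      rw [hc, map_mul, map_natCast, ZMod.natCast_self, zero_mul]
    rw [map_sub, sub_eq_zero] at h0
    rw [h0, hψ'z₀]
  have hnormp : ¬ ((p:ℤ) ∣ z.norm) := by
    intro hd
    have h1 : ((z.norm : ℤ) : ZMod p) = 0 := by
      rwa [ZMod.intCast_zmod_eq_zero_iff_dvd]
    have h2 : ((z.norm : ℤ) : ZMod p) = u := by
      have h3 := congrArg ψ (Zsqrtd.norm_eq_mul_conj z)
      rw [map_intCast, map_mul, hstar z, hψz, hψ'z, mul_one] at h3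
      exact h3
    rw [h2] at h1
    exact hu0 h1
  have hnormq : ¬ ((q:ℤ) ∣ z.norm) := by
    intro hd
    have h1 : (q:ℤ) ∣ z.norm - (1:GI).norm := gi_norm_cong hzq
    rw [Zsqrtd.norm_one] at h1
    have h2 : (q:ℤ) ∣ 1 := (dvd_sub_right hd).mp h1
    have := Int.le_of_dvd one_pos h2
    have := hq.two_le
    omega
  have hcop : IsCoprime (((p*q:ℕ)):ℤ) z.norm := by
    push_cast
    exact (gi_prime_not_dvd_coprime hp hnormp).mul_left (gi_prime_not_dvd_coprime hq hnormq)
  have hdvd := H z hcop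
  have hpdvd : (p:GI) ∣ z^F - (star z)^F :=
    dvd_trans (by push_cast; exact Dvd.intro _ rfl) hdvd
  have h0 : ψ (z^F - (star z)^F) = 0 := by
    obtain ⟨c, hc⟩ := hpdvd
    rw [hc, map_mul, map_natCast, ZMod.natCast_self, zero_mul]
  rw [map_sub, map_pow, map_pow, hstar z, hψz, hψ'z, one_pow, sub_eq_zero] at h0
  have hgF : g ^ F = 1 := by
    ext
    push_cast
    exact h0
  have hord : orderOf g = p - 1 := by
    rw [orderOf_eq_card_of_forall_mem_zpowers hg]
    rw [Nat.card_eq_fintype_card]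
    exact ZMod.card_units p
  rw [← hord]
  exact orderOf_dvd_of_pow_eq_one hgF

private lemma gi_forward3 {p q F : ℕ} (hp : p.Prime) (hq : q.Prime) (hne : p ≠ q)
    (h4 : p % 4 = 3)
    (H : ∀ z : GI, IsCoprime (((p*q : ℕ)) : ℤ) z.norm →
      (((p*q : ℕ)) : GI) ∣ z^F - (star z)^F) : (p+1) ∣ F := by
  haveI : Fact p.Prime := ⟨hp⟩
  have hprime : Prime ((p:GI)) :=
    (GaussianInt.prime_iff_mod_four_eq_three_of_nat_prime p).mpr h4
  set I : Ideal GI := Ideal.span {((p:ℕ) : GI)} with hI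
  haveI hmax : I.IsMaximal := PrincipalIdealRing.isMaximal_of_irreducible hprime.irreducible
  letI : Field (GI ⧸ I) := Ideal.Quotient.field I
  set φ : GI →+* GI ⧸ I := Ideal.Quotient.mk I with hφ
  have hker : ∀ w : GI, φ w = 0 ↔ (p:GI) ∣ w := by
    intro w
    rw [hφ]
    exact Ideal.Quotient.eq_zero_iff_dvd _ w
  have hsub : ∀ w w' : GI, φ w = φ w' ↔ (p:GI) ∣ w - w' := by
    intro w w'
    rw [← sub_eq_zero, ← map_sub, hker]
  set f : ZMod p × ZMod p → GI ⧸ I := fun x => φ ⟨(x.1.val : ℤ), (x.2.val : ℤ)⟩ with hf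
  have hinj : Function.Injective f := by
    intro x y hxy
    rw [hf] at hxy
    simp only at hxy
    rw [hsub] at hxy
    have hd : ((p:ℤ):GI) ∣
        (⟨(x.1.val : ℤ), (x.2.val : ℤ)⟩ - ⟨(y.1.val : ℤ), (y.2.val : ℤ)⟩ : GI) := by
      exact_mod_cast hxy
    rw [Zsqrtd.intCast_dvd] at hd
    obtain ⟨h1, h2⟩ := hd
    simp only [Zsqrtd.re_sub, Zsqrtd.im_sub] at h1 h2
    have e1 : ((x.1.val : ℤ) : ZMod p) = ((y.1.val : ℤ) : ZMod p) := by
      rw [← sub_eq_zero, ← Int.cast_sub, ZMod.intCast_zmod_eq_zero_iff_dvd]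
      exact h1
    have e2 : ((x.2.val : ℤ) : ZMod p) = ((y.2.val : ℤ) : ZMod p) := by
      rw [← sub_eq_zero, ← Int.cast_sub, ZMod.intCast_zmod_eq_zero_iff_dvd]
      exact h2
    push_cast at e1 e2
    rw [ZMod.natCast_rightInverse x.1, ZMod.natCast_rightInverse y.1] at e1
    rw [ZMod.natCast_rightInverse x.2, ZMod.natCast_rightInverse y.2] at e2
    exact Prod.ext e1 e2
  have hsurj : Function.Surjective f := by
    intro x
    obtain ⟨w, hw⟩ := Ideal.Quotient.mk_surjective x
    refine ⟨((w.re : ZMod p), (w.im : ZMod p)), ?_⟩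
    rw [hf]
    simp only
    rw [← hw, hsub]
    have hd : ((p:ℤ):GI) ∣
        (⟨(((w.re : ZMod p)).val : ℤ), (((w.im : ZMod p)).val : ℤ)⟩ - w : GI) := by
      rw [Zsqrtd.intCast_dvd]
      constructor
      · simp only [Zsqrtd.re_sub]
        rw [ZMod.val_intCast]
        exact ⟨-(w.re / p), by rw [Int.emod_def]; ring⟩
      · simp only [Zsqrtd.im_sub]
        rw [ZMod.val_intCast]
        exact ⟨-(w.im / p), by rw [Int.emod_def]; ring⟩
    exact_mod_cast hd
  haveI : Finite (GI ⧸ I) := Finite.of_surjective f hsurj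
  have hcard : Nat.card (GI ⧸ I) = p * p := by
    rw [← Nat.card_eq_of_bijective f ⟨hinj, hsurj⟩, Nat.card_prod, Nat.card_zmod]
  obtain ⟨g, hg⟩ := IsCyclic.exists_generator (α := (GI ⧸ I)ˣ)
  have hord : orderOf g = p * p - 1 := by
    have htop : Subgroup.zpowers g = ⊤ := by
      rw [Subgroup.eq_top_iff']
      exact hg
    rw [← Nat.card_zpowers, htop, Subgroup.card_top, Nat.card_units, hcard]
  obtain ⟨w, hw⟩ := Ideal.Quotient.mk_surjective ((g : (GI ⧸ I)ˣ) : GI ⧸ I)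
  obtain ⟨z, hzp, hzq⟩ := gi_mix hp hq hne w
  have hφz : φ z = (g : (GI ⧸ I)ˣ) := by
    rw [← hw, hsub]
    exact hzp
  have hfrob : φ (star z) = (φ z) ^ p := by
    have hf3 := gi_frob hp (by rw [Nat.odd_iff]; omega) z
    rw [if_pos h4] at hf3
    have h := (hsub (z ^ p) (star z)).mpr hf3
    rw [map_pow] at h
    exact h.symm
  have hnormp : ¬ ((p:ℤ) ∣ z.norm) := by
    intro hd
    have h1 : φ ((z.norm : ℤ) : GI) = 0 := by
      rw [hker]
      have := (Zsqrtd.intCast_dvd_intCast (d := -1) (p:ℤ) z.norm).mpr hd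
      exact_mod_cast this
    rw [Zsqrtd.norm_eq_mul_conj, map_mul, hfrob, hφz] at h1
    exact mul_ne_zero (Units.ne_zero g) (pow_ne_zero _ (Units.ne_zero g)) h1
  have hnormq : ¬ ((q:ℤ) ∣ z.norm) := by
    intro hd
    have h1 : (q:ℤ) ∣ z.norm - (1:GI).norm := gi_norm_cong hzq
    rw [Zsqrtd.norm_one] at h1
    have h2 : (q:ℤ) ∣ 1 := (dvd_sub_right hd).mp h1
    have := Int.le_of_dvd one_pos h2
    have := hq.two_le
    omega
  have hcop : IsCoprime (((p*q:ℕ)):ℤ) z.norm := by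
    push_cast
    exact (gi_prime_not_dvd_coprime hp hnormp).mul_left (gi_prime_not_dvd_coprime hq hnormq)
  have hdvd := H z hcop
  have hpdvd : (p:GI) ∣ z^F - (star z)^F :=
    dvd_trans (by push_cast; exact Dvd.intro _ rfl) hdvd
  have h0 : φ (z^F - (star z)^F) = 0 := (hker _).mpr hpdvd
  rw [map_sub, map_pow, map_pow, hfrob, hφz, ← pow_mul, sub_eq_zero] at h0
  have hgg : g ^ F = g ^ (p * F) := by
    ext
    push_cast
    exact h0
  have hmodeq : F ≡ p * F [MOD (p*p - 1)] := by
    rw [← hord]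
    exact (pow_eq_pow_iff_modEq).mp hgg
  have hdvd2 : (p*p - 1) ∣ (p*F - F) :=
    (Nat.modEq_iff_dvd' (Nat.le_mul_of_pos_left F hp.pos)).mp hmodeq
  have hp1 : 1 ≤ p := hp.one_lt.le
  have e1 : p*p - 1 = (p-1)*(p+1) := by
    cases' Nat.exists_eq_add_of_le hp1 with k hk
    subst hk
    simp [Nat.add_sub_cancel_left]
    ring_nf
    omega
  have e2 : p*F - F = (p-1)*F := by
    cases' Nat.exists_eq_add_of_le hp1 with k hk
    subst hk
    simp [Nat.add_sub_cancel_left]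
    ring_nf
    omega
  rw [e1, e2] at hdvd2
  have hppos : 0 < p - 1 := by omega
  exact (Nat.mul_dvd_mul_iff_left hppos).mp hdvd2

end GaussAux

theorem gaussCarmichael_two_factors (p q : ℕ) (hp : p.Prime) (hq : q.Prime)
    (hop : Odd p) (hoq : Odd q) (hpq : p < q) :
    GaussCarmichael (p * q) ↔ q = p + 2 ∧ 8 ∣ p + q := by
  have hne : p ≠ q := Nat.ne_of_lt hpq
  have hp3 : 3 ≤ p := by
    have := hp.two_le
    rcases Nat.odd_iff.mp hop with h
    omega
  have hq3 : 3 ≤ q := by omega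
  have hpmod : p % 4 = 1 ∨ p % 4 = 3 := by
    have := Nat.odd_iff.mp hop
    omega
  have hqmod : q % 4 = 1 ∨ q % 4 = 3 := by
    have := Nat.odd_iff.mp hoq
    omega
  have hmul_mod : (p * q) % 4 = (p % 4) * (q % 4) % 4 := Nat.mul_mod p q 4
  constructor
  · rintro ⟨-, -, H⟩
    have H' : ∀ z : GaussianInt, IsCoprime (((q*p : ℕ)) : ℤ) z.norm →
        (((q*p : ℕ)) : GaussianInt) ∣ z^(gaussF (p*q)) - (star z)^(gaussF (p*q)) := by
      intro z hz
      rw [Nat.mul_comm q p] at hz ⊢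
      exact H z hz
    rcases hpmod with hp4 | hp4 <;> rcases hqmod with hq4 | hq4
    · -- p ≡ 1, q ≡ 1 : impossible
      exfalso
      have hm : (p*q) % 4 = 1 := by rw [hmul_mod, hp4, hq4]
      have hFval : gaussF (p*q) = p*q - 1 := by rw [gaussF, if_pos hm]
      have hQ : (q-1) ∣ (p*q - 1) := by
        have := gi_forward1 hq hp (Ne.symm hne) hq4 H'
        rwa [hFval] at this
      have hQ' : ((q:ℤ)-1) ∣ ((p:ℤ)-1) := by
        zify [show 1 ≤ q by omega, show 1 ≤ p*q by nlinarith] at hQ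
        have h2 : ((q:ℤ)-1) ∣ (p:ℤ)*((q:ℤ)-1) := dvd_mul_left _ _
        have := dvd_sub hQ h2
        convert this using 1
        · rfl
        ring
      have hle := Int.le_of_dvd (by omega : (0:ℤ) < (p:ℤ)-1) hQ'
      omega
    · -- p ≡ 1, q ≡ 3 : impossible
      exfalso
      have hm : (p*q) % 4 = 3 := by rw [hmul_mod, hp4, hq4]
      have hFval : gaussF (p*q) = p*q + 1 := by rw [gaussF, if_neg (by omega), if_pos hm]
      have hQ : (q+1) ∣ (p*q + 1) := by
        have := gi_forward3 hq hp (Ne.symm hne) hq4 H'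
        rwa [hFval] at this
      have hQ' : ((q:ℤ)+1) ∣ ((p:ℤ)-1) := by
        zify at hQ
        have h2 : ((q:ℤ)+1) ∣ (p:ℤ)*((q:ℤ)+1) := dvd_mul_left _ _
        have := dvd_sub h2 hQ
        convert this using 1
        · rfl
        ring
      have hle := Int.le_of_dvd (by omega : (0:ℤ) < (p:ℤ)-1) hQ'
      omega
    · -- p ≡ 3, q ≡ 1 : q = p + 2
      have hm : (p*q) % 4 = 3 := by rw [hmul_mod, hp4, hq4]
      have hFval : gaussF (p*q) = p*q + 1 := by rw [gaussF, if_neg (by omega), if_pos hm]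
      have hP : (p+1) ∣ (p*q + 1) := by
        have := gi_forward3 hp hq hne hp4 H
        rwa [hFval] at this
      have hQ : (q-1) ∣ (p*q + 1) := by
        have := gi_forward1 hq hp (Ne.symm hne) hq4 H'
        rwa [hFval] at this
      -- p+1 ∣ q-1
      have h1 : ((p:ℤ)+1) ∣ ((q:ℤ)-1) := by
        zify at hP
        have hb : ((p:ℤ)+1) ∣ (q:ℤ)*((p:ℤ)+1) := dvd_mul_left _ _
        have := dvd_sub hb hP
        convert this using 1
        · rfl
        ring
      have h2 : ((q:ℤ)-1) ∣ ((p:ℤ)+1) := by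
        zify [show 1 ≤ q by omega] at hQ
        have hb : ((q:ℤ)-1) ∣ (p:ℤ)*((q:ℤ)-1) := dvd_mul_left _ _
        have := dvd_sub hQ hb
        convert this using 1
        · rfl
        ring
      have hle1 := Int.le_of_dvd (by omega : (0:ℤ) < (q:ℤ)-1) h1
      have hle2 := Int.le_of_dvd (by omega : (0:ℤ) < (p:ℤ)+1) h2
      have heq : q = p + 2 := by omega
      exact ⟨heq, by omega⟩
    · -- p ≡ 3, q ≡ 3 : impossible
      exfalso
      have hm : (p*q) % 4 = 1 := by rw [hmul_mod, hp4, hq4]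
      have hFval : gaussF (p*q) = p*q - 1 := by rw [gaussF, if_pos hm]
      have hQ : (q+1) ∣ (p*q - 1) := by
        have := gi_forward3 hq hp (Ne.symm hne) hq4 H'
        rwa [hFval] at this
      have hQ' : ((q:ℤ)+1) ∣ ((p:ℤ)+1) := by
        zify [show 1 ≤ p*q by nlinarith] at hQ
        have h2 : ((q:ℤ)+1) ∣ (p:ℤ)*((q:ℤ)+1) := dvd_mul_left _ _
        have := dvd_sub h2 hQ
        convert this using 1
        · rfl
        ring
      have hle := Int.le_of_dvd (by omega : (0:ℤ) < (p:ℤ)+1) hQ'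
      omega
  · rintro ⟨rfl, h8⟩
    have hp4 : p % 4 = 3 := by
      have := Nat.odd_iff.mp hop
      omega
    have hq4 : (p+2) % 4 = 1 := by omega
    have hm : (p*(p+2)) % 4 = 3 := by rw [hmul_mod, hp4, hq4]
    have hFval : gaussF (p*(p+2)) = p*(p+2) + 1 := by rw [gaussF, if_neg (by omega), if_pos hm]
    have hPdvd : (p+1) ∣ (p*(p+2) + 1) := ⟨p+1, by ring⟩
    have hQdvd : ((p+2)-1) ∣ (p*(p+2) + 1) := by
      have : (p+2) - 1 = p+1 := by omega
      rw [this]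
      exact hPdvd
    refine ⟨?_, ?_, ?_⟩
    · calc 1 < 3 * 3 := by norm_num
      _ ≤ p * (p+2) := Nat.mul_le_mul hp3 (by omega)
    · exact Nat.not_prime_mul (by omega) (by omega)
    · intro z hz
      rw [hFval]
      have hzc : IsCoprime ((p:ℤ) * ((p+2:ℕ):ℤ)) z.norm := by
        have := hz
        push_cast at this ⊢
        exact this
      have hcp : IsCoprime ((p:ℕ):ℤ) z.norm := hzc.of_mul_left_left
      have hcq : IsCoprime (((p+2:ℕ)):ℤ) z.norm := hzc.of_mul_left_right
      have hdp : ((p:ℕ):GaussianInt) ∣ z^(p*(p+2)+1) - (star z)^(p*(p+2)+1) := by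
        have hFd : gaussF (p*(p+2)) = p*(p+2)+1 := hFval
        exact gi_dvd3 hp hp4 hPdvd z
      have hdq : (((p+2:ℕ)):GaussianInt) ∣ z^(p*(p+2)+1) - (star z)^(p*(p+2)+1) := by
        have hdvd' : ((p+2)-1) ∣ (p*(p+2)+1) := hQdvd
        exact gi_dvd1 hq hq4 hdvd' z hcq
      have hcopGI : IsCoprime ((p:ℕ):GaussianInt) (((p+2:ℕ)):GaussianInt) := by
        have hcop : IsCoprime ((p:ℕ):ℤ) (((p+2:ℕ)):ℤ) :=
          Nat.isCoprime_iff_coprime.mpr ((Nat.coprime_primes hp hq).mpr hne)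
        have := hcop.map (Int.castRingHom GaussianInt)
        simpa using this
      have := hcopGI.mul_dvd hdp hdq
      have hcast : ((p*(p+2) : ℕ) : GaussianInt) = ((p:ℕ):GaussianInt) * (((p+2:ℕ)):GaussianInt) := by
        push_cast
        ring
      rw [hcast]
      exact this
end

section
/- If p and p+2 are both prime with p ≡ 3 (mod 4), then n = p(p+2) satisfies Φ(n) = F(n) = n + 1 = (p+1)², so n is a Gaussian Lehmer number (Φ(n) divides F(n)). -/
lemma circle_card_three (q : ℕ) (hq : q.Prime) (h4 : q % 4 = 3) :
    Nat.card {x : ZMod q × ZMod q // x.1 ^ 2 + x.2 ^ 2 = 1} = q + 1 := by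
  haveI := Fact.mk hq
  have h2 : (2 : ZMod q) ≠ 0 := by
    have := (ZMod.natCast_eq_zero_iff 2 q).not.mpr
      (by intro h; have := Nat.le_of_dvd (by norm_num) h; omega)
    simpa using this
  have hns : ∀ t : ZMod q, t ^ 2 + 1 ≠ 0 := by
    intro t h
    have hsq : IsSquare (-1 : ZMod q) := ⟨t, by linear_combination -h⟩
    rw [ZMod.exists_sq_eq_neg_one_iff] at hsq
    exact hsq h4
  have e : Option (ZMod q) ≃ {x : ZMod q × ZMod q // x.1 ^ 2 + x.2 ^ 2 = 1} := by
    refine Equiv.mk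
      (fun o => match o with
        | none => ⟨(-1, 0), by ring⟩
        | some t => ⟨((1 - t ^ 2) / (t ^ 2 + 1), 2 * t / (t ^ 2 + 1)), by
            have h := hns t
            field_simp
            ring⟩)
      (fun x => if x.1.1 = -1 then none else some (x.1.2 / (x.1.1 + 1)))
      ?_ ?_
    · intro o
      match o with
      | none => simp
      | some t =>
        have h := hns t
        have hne : (1 - t ^ 2) / (t ^ 2 + 1) ≠ -1 := by
          intro hh
          rw [div_eq_iff h] at hh
          have : (2 : ZMod q) = 0 := by linear_combination hh
          exact h2 this
        dsimp only
        rw [if_neg hne]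
        congr 1
        have hd : (1 - t ^ 2) / (t ^ 2 + 1) + 1 = 2 / (t ^ 2 + 1) := by
          field_simp
          ring
        rw [hd]
        rw [div_div_div_eq]
        rw [div_eq_iff (mul_ne_zero h h2)]
        ring
    · intro x
      obtain ⟨⟨a, b⟩, hab⟩ := x
      by_cases ha : a = -1
      · subst ha
        have hb : b = 0 := by
          have : b ^ 2 = 0 := by linear_combination hab
          exact pow_eq_zero_iff (by norm_num) |>.mp this
        simp [hb]
      · have ha1 : a + 1 ≠ 0 := fun hh => ha (by linear_combination hh)
        simp only [ha, if_neg]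
        refine Subtype.ext (Prod.ext ?_ ?_)
        · show (1 - (b / (a + 1)) ^ 2) / ((b / (a + 1)) ^ 2 + 1) = a
          have h := hns (b / (a + 1))
          rw [div_eq_iff h]
          field_simp
          linear_combination (-(a+1)) * hab
        · show 2 * (b / (a + 1)) / ((b / (a + 1)) ^ 2 + 1) = b
          have h := hns (b / (a + 1))
          rw [div_eq_iff h]
          field_simp
          linear_combination (-b) * hab
  rw [← Nat.card_congr e]
  simp [Nat.card_eq_fintype_card, ZMod.card]


lemma circle_card_one (q : ℕ) (hq : q.Prime) (h4 : q % 4 = 1) :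
    Nat.card {x : ZMod q × ZMod q // x.1 ^ 2 + x.2 ^ 2 = 1} = q - 1 := by
  haveI := Fact.mk hq
  have hq5 : 5 ≤ q := by
    have := hq.two_le
    have h1 : q ≠ 1 := Nat.Prime.ne_one hq
    omega
  have h2 : (2 : ZMod q) ≠ 0 := by
    have := (ZMod.natCast_eq_zero_iff 2 q).not.mpr
      (by intro h; have := Nat.le_of_dvd (by norm_num) h; omega)
    simpa using this
  obtain ⟨i, hi⟩ : IsSquare (-1 : ZMod q) :=
    (ZMod.exists_sq_eq_neg_one_iff).mpr (by omega)
  have hi0 : i ≠ 0 := by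
    intro h; rw [h, mul_zero] at hi
    exact (by norm_num : (-1 : ZMod q) ≠ 0) hi
  have e : {x : ZMod q × ZMod q // x.1 ^ 2 + x.2 ^ 2 = 1} ≃ (ZMod q)ˣ := by
    refine Equiv.mk
      (fun x => Units.mkOfMulEqOne (x.1.1 + i * x.1.2) (x.1.1 - i * x.1.2)
        (by obtain ⟨⟨a, b⟩, hab⟩ := x; linear_combination hab + b ^ 2 * hi))
      (fun u => ⟨((↑u + ↑u⁻¹) / 2, (↑u - ↑u⁻¹) / (2 * i)), by
        have hm : (u : ZMod q) * ↑u⁻¹ = 1 := u.mul_inv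
        field_simp
        linear_combination (2 - (u:ZMod q)^2 - (↑u⁻¹ : ZMod q)^2) * hi + 2 * (i^2 - 1) * hm⟩)
      ?_ ?_
    · intro x
      obtain ⟨⟨a, b⟩, hab⟩ := x
      have hv : (↑(Units.mkOfMulEqOne (a + i * b) (a - i * b)
          (by linear_combination hab + b ^ 2 * hi))⁻¹ : ZMod q) = a - i * b := rfl
      refine Subtype.ext (Prod.ext ?_ ?_) <;> dsimp only <;>
        rw [hv, Units.val_mkOfMulEqOne]
      · field_simp
        ring
      · field_simp
        ring
    · intro u
      have hm : (u : ZMod q) * ↑u⁻¹ = 1 := u.mul_inv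
      ext
      rw [Units.val_mkOfMulEqOne]
      dsimp only
      field_simp
      ring
  rw [Nat.card_congr e, Nat.card_eq_fintype_card, ZMod.card_units]


def circle_equiv_of_ringEquiv {R S : Type*} [CommRing R] [CommRing S] (e : R ≃+* S) :
    {x : R × R // x.1 ^ 2 + x.2 ^ 2 = 1} ≃ {x : S × S // x.1 ^ 2 + x.2 ^ 2 = 1} where
  toFun x := ⟨(e x.1.1, e x.1.2), by
    rw [← map_pow, ← map_pow, ← map_add, x.2, map_one]⟩
  invFun x := ⟨(e.symm x.1.1, e.symm x.1.2), by
    rw [← map_pow, ← map_pow, ← map_add, x.2, map_one]⟩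
  left_inv x := by ext <;> simp
  right_inv x := by ext <;> simp

def circle_equiv_prod {A B : Type*} [CommRing A] [CommRing B] :
    {x : (A × B) × (A × B) // x.1 ^ 2 + x.2 ^ 2 = 1} ≃
      {x : A × A // x.1 ^ 2 + x.2 ^ 2 = 1} × {x : B × B // x.1 ^ 2 + x.2 ^ 2 = 1} where
  toFun x := ⟨⟨(x.1.1.1, x.1.2.1), congrArg Prod.fst x.2⟩,
    ⟨(x.1.1.2, x.1.2.2), congrArg Prod.snd x.2⟩⟩
  invFun x := ⟨((x.1.1.1, x.2.1.1), (x.1.1.2, x.2.1.2)), by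
    have h1 := x.1.2; have h2 := x.2.2
    exact Prod.ext h1 h2⟩
  left_inv x := by ext <;> rfl
  right_inv x := by ext <;> rfl

lemma gPhi_mul_s16 (a b : ℕ) (h : Nat.Coprime a b) :
    Nat.card {x : ZMod (a * b) × ZMod (a * b) // x.1 ^ 2 + x.2 ^ 2 = 1} =
      Nat.card {x : ZMod a × ZMod a // x.1 ^ 2 + x.2 ^ 2 = 1} *
        Nat.card {x : ZMod b × ZMod b // x.1 ^ 2 + x.2 ^ 2 = 1} := by
  rw [Nat.card_congr ((circle_equiv_of_ringEquiv (ZMod.chineseRemainder h)).trans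
    circle_equiv_prod), Nat.card_prod]


theorem twin_primes_gauss_lehmer (p : ℕ) (hp : p.Prime) (hp2 : (p + 2).Prime)
    (h4 : p % 4 = 3) :
    gPhi (p * (p + 2)) = gaussF (p * (p + 2)) ∧
      gaussF (p * (p + 2)) = p * (p + 2) + 1 ∧
      p * (p + 2) + 1 = (p + 1) ^ 2 ∧
      gPhi (p * (p + 2)) ∣ gaussF (p * (p + 2)) := by
  have hcop : Nat.Coprime p (p + 2) := (Nat.coprime_primes hp hp2).mpr (by omega)
  have hp21 : (p + 2) % 4 = 1 := by omega
  have hmod : (p * (p + 2)) % 4 = 3 := by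
    rw [Nat.mul_mod, h4, hp21]
  have hF : gaussF (p * (p + 2)) = p * (p + 2) + 1 := by
    unfold gaussF
    rw [if_neg (by omega), if_pos hmod]
  have hPhi : gPhi (p * (p + 2)) = (p + 1) ^ 2 := by
    unfold gPhi
    rw [gPhi_mul_s16 p (p + 2) hcop, circle_card_three p hp h4,
      circle_card_one (p + 2) hp2 hp21]
    have : p + 2 - 1 = p + 1 := by omega
    rw [this]; ring
  have hsq : p * (p + 2) + 1 = (p + 1) ^ 2 := by ring
  refine ⟨by rw [hPhi, hF, hsq], hF, hsq, ?_⟩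
  rw [hPhi, hF, hsq]
end

section
/- Any divisor of an odd Gaussian Carmichael number n is a Gaussian cyclic number, i.e., gcd(Φ(d), d) = 1 for every d | n. -/
open GaussianInt

abbrev GQ (d : ℕ) : Type := GaussianInt ⧸ Ideal.span {(d : GaussianInt)}
noncomputable def gq (d : ℕ) : GaussianInt →+* GQ d := Ideal.Quotient.mk _

lemma gq_eq_iff (d : ℕ) (x y : GaussianInt) :
    gq d x = gq d y ↔ (d : GaussianInt) ∣ x - y := by
  rw [gq, Ideal.Quotient.mk_eq_mk_iff_sub_mem, Ideal.mem_span_singleton]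

lemma natCast_dvd_gauss (d : ℕ) (x : GaussianInt) :
    (d : GaussianInt) ∣ x ↔ (d:ℤ) ∣ x.re ∧ (d:ℤ) ∣ x.im := by
  have : ((d:ℕ) : GaussianInt) = ((d:ℤ) : GaussianInt) := by push_cast; ring
  rw [this, Zsqrtd.intCast_dvd]

lemma dvd_sub_re_im (d : ℕ) [NeZero d] (z : GaussianInt) :
    (d : GaussianInt) ∣ (⟨(((z.re : ZMod d)).val : ℤ), (((z.im : ZMod d)).val : ℤ)⟩ - z) := by
  rw [natCast_dvd_gauss]
  constructor
  · show (d:ℤ) ∣ (((z.re : ZMod d).val : ℤ) - z.re)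
    rw [← ZMod.intCast_zmod_eq_zero_iff_dvd]
    push_cast
    rw [ZMod.natCast_rightInverse _, sub_self]
  · show (d:ℤ) ∣ (((z.im : ZMod d).val : ℤ) - z.im)
    rw [← ZMod.intCast_zmod_eq_zero_iff_dvd]
    push_cast
    rw [ZMod.natCast_rightInverse _, sub_self]

lemma finite_GQ (d : ℕ) [NeZero d] : Finite (GQ d) := by
  apply Finite.of_surjective
    (f := fun x : ZMod d × ZMod d => gq d ⟨(x.1.val : ℤ), (x.2.val : ℤ)⟩)
  intro w
  obtain ⟨z, rfl⟩ := (Ideal.Quotient.mk_surjective (I := Ideal.span {(d : GaussianInt)}) w)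
  exact ⟨((z.re : ZMod d), (z.im : ZMod d)), (gq_eq_iff d _ z).mpr (dvd_sub_re_im d z)⟩

noncomputable def gconj (d : ℕ) : GQ d →+* GQ d :=
  Ideal.Quotient.lift _ ((gq d).comp (starRingEnd GaussianInt)) (by
    intro x hx
    rw [Ideal.mem_span_singleton] at hx
    obtain ⟨c, rfl⟩ := hx
    simp only [RingHom.comp_apply, starRingEnd_apply, star_mul]
    have hsd : star ((d : ℕ) : GaussianInt) = ((d : ℕ) : GaussianInt) := by simp
    rw [mul_comm, hsd]
    have : (gq d) ((d : GaussianInt)) = 0 := by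
      rw [gq, Ideal.Quotient.eq_zero_iff_mem]
      exact Ideal.mem_span_singleton_self _
    rw [map_mul, this, zero_mul])

@[simp] lemma gconj_mk (d : ℕ) (z : GaussianInt) : gconj d (gq d z) = gq d (star z) := rfl

noncomputable def gnormHom (d : ℕ) : (GQ d)ˣ →* (GQ d)ˣ where
  toFun u := u * Units.map (gconj d).toMonoidHom u
  map_one' := by simp
  map_mul' u v := by
    simp only [map_mul]
    exact mul_mul_mul_comm u v _ _

noncomputable def gker (d : ℕ) : Subgroup (GQ d)ˣ := MonoidHom.ker (gnormHom d)

lemma mem_gker_iff (d : ℕ) (u : (GQ d)ˣ) :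
    u ∈ gker d ↔ (u : GQ d) * gconj d (u : GQ d) = 1 := by
  rw [gker, MonoidHom.mem_ker, gnormHom]
  constructor
  · intro h
    have := congrArg (Units.val) h
    simpa using this
  · intro h
    ext
    simpa using h

lemma norm_one_mod (d : ℕ) (z : GaussianInt) (hz : (d:ℤ) ∣ Zsqrtd.norm z - 1) :
    gq d z * gq d (star z) = 1 := by
  rw [← map_mul, ← Zsqrtd.norm_eq_mul_conj, ← map_one (gq d), gq_eq_iff, natCast_dvd_gauss]
  constructor
  · simpa using hz
  · simp

lemma norm_key (d : ℕ) [NeZero d] (x : {x : ZMod d × ZMod d // x.1 ^ 2 + x.2 ^ 2 = 1}) :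
    (d:ℤ) ∣ Zsqrtd.norm (⟨(x.1.1.val : ℤ), (x.1.2.val : ℤ)⟩ : GaussianInt) - 1 := by
  rw [← ZMod.intCast_zmod_eq_zero_iff_dvd]
  rw [Zsqrtd.norm_def]
  push_cast
  rw [ZMod.natCast_rightInverse _, ZMod.natCast_rightInverse _]
  have := x.2
  push_cast at this ⊢
  linear_combination this

noncomputable def gmap (d : ℕ) [NeZero d]
    (x : {x : ZMod d × ZMod d // x.1 ^ 2 + x.2 ^ 2 = 1}) : gker d :=
  ⟨Units.mkOfMulEqOne (gq d ⟨(x.1.1.val : ℤ), (x.1.2.val : ℤ)⟩)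
      (gq d (star ⟨(x.1.1.val : ℤ), (x.1.2.val : ℤ)⟩))
      (norm_one_mod d _ (norm_key d x)), by
    rw [mem_gker_iff]
    simp only [Units.val_mkOfMulEqOne, gconj_mk]
    exact norm_one_mod d _ (norm_key d x)⟩

lemma gPhi_eq_card_gker (d : ℕ) [NeZero d] : gPhi d = Nat.card (gker d) := by
  apply Nat.card_eq_of_bijective (gmap d)
  constructor
  · intro x y hxy
    have h1 : gq d ⟨(x.1.1.val : ℤ), (x.1.2.val : ℤ)⟩
        = gq d ⟨(y.1.1.val : ℤ), (y.1.2.val : ℤ)⟩ := by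
      have h0 := congrArg Subtype.val hxy
      have := congrArg Units.val h0
      simpa [gmap] using this
    rw [gq_eq_iff, natCast_dvd_gauss] at h1
    obtain ⟨hre, him⟩ := h1
    apply Subtype.ext
    apply Prod.ext
    · have : ((x.1.1.val : ℤ) : ZMod d) = ((y.1.1.val : ℤ) : ZMod d) := by
        rw [← sub_eq_zero, ← Int.cast_sub, ZMod.intCast_zmod_eq_zero_iff_dvd]
        simpa using hre
      push_cast at this
      rwa [ZMod.natCast_rightInverse _, ZMod.natCast_rightInverse _] at this
    · have : ((x.1.2.val : ℤ) : ZMod d) = ((y.1.2.val : ℤ) : ZMod d) := by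
        rw [← sub_eq_zero, ← Int.cast_sub, ZMod.intCast_zmod_eq_zero_iff_dvd]
        simpa using him
      push_cast at this
      rwa [ZMod.natCast_rightInverse _, ZMod.natCast_rightInverse _] at this
  · rintro ⟨u, hu⟩
    obtain ⟨z, hz⟩ := Ideal.Quotient.mk_surjective (I := Ideal.span {(d : GaussianInt)}) (u : GQ d)
    have hz' : gq d z = (u : GQ d) := hz
    have hnorm : (d:ℤ) ∣ Zsqrtd.norm z - 1 := by
      rw [mem_gker_iff] at hu
      rw [← hz', gconj_mk, ← map_mul, ← Zsqrtd.norm_eq_mul_conj, ← map_one (gq d),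
        gq_eq_iff, natCast_dvd_gauss] at hu
      simpa using hu.1
    have hsq : ((z.re : ZMod d))^2 + ((z.im : ZMod d))^2 = 1 := by
      have : (((Zsqrtd.norm z - 1 : ℤ)) : ZMod d) = 0 := by
        rwa [ZMod.intCast_zmod_eq_zero_iff_dvd]
      rw [Zsqrtd.norm_def] at this
      push_cast at this
      linear_combination this
    refine ⟨⟨((z.re : ZMod d), (z.im : ZMod d)), hsq⟩, ?_⟩
    apply Subtype.ext
    apply Units.ext
    show gq d _ = (u : GQ d)
    rw [← hz', gq_eq_iff]
    exact dvd_sub_re_im d z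

lemma gq_surj (d : ℕ) : Function.Surjective (gq d) := Ideal.Quotient.mk_surjective

lemma exists_split (d : ℕ) : ∀ n : ℕ, 0 < n →
    ∃ a b : ℕ, n = a * b ∧ Nat.Coprime b d ∧ ∀ p : ℕ, p.Prime → p ∣ a → p ∣ d := by
  intro n
  induction n using Nat.strong_induction_on with
  | _ n ih =>
    intro hn
    by_cases hc : Nat.Coprime n d
    · exact ⟨1, n, (one_mul n).symm, hc, fun p hp hpa =>
        absurd (Nat.dvd_one.mp hpa) hp.ne_one⟩
    · obtain ⟨p, hp, hpg⟩ := Nat.exists_prime_and_dvd hc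
      have hpn : p ∣ n := hpg.trans (Nat.gcd_dvd_left _ _)
      have hpd : p ∣ d := hpg.trans (Nat.gcd_dvd_right _ _)
      have hplt : n / p < n := Nat.div_lt_self hn hp.one_lt
      have hppos : 0 < n / p := Nat.div_pos (Nat.le_of_dvd hn hpn) hp.pos
      obtain ⟨a, b, hab, hb, ha⟩ := ih (n / p) hplt hppos
      refine ⟨p * a, b, ?_, hb, ?_⟩
      · rw [mul_assoc, ← hab, Nat.mul_div_cancel' hpn]
      · intro q hq hqa
        rcases (Nat.Prime.dvd_mul hq).mp hqa with h | h
        · exact (Nat.prime_dvd_prime_iff_eq hq hp).mp h ▸ hpd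
        · exact ha q hq h

lemma gauss_int_prime_not_unit {p : ℕ} (hp : p.Prime) : ¬ IsUnit ((p : ℕ) : GaussianInt) := by
  intro hu
  rw [← Zsqrtd.norm_eq_one_iff, Zsqrtd.norm_natCast] at hu
  simp only [Int.natAbs_mul, Int.natAbs_natCast] at hu
  exact hp.ne_one (Nat.dvd_one.mp ⟨p, hu.symm⟩)

lemma norm_sub_dvd (r t z : GaussianInt) (h1 : r ∣ z - t) (h2 : r ∣ star z - star t) :
    r ∣ ((Zsqrtd.norm z : ℤ) : GaussianInt) - ((Zsqrtd.norm t : ℤ) : GaussianInt) := by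
  rw [Zsqrtd.norm_eq_mul_conj, Zsqrtd.norm_eq_mul_conj]
  have h3 : z * star z - t * star t = (z - t) * star z + t * (star z - star t) := by ring
  rw [h3]
  exact dvd_add (h1.mul_right _) (h2.mul_left _)

lemma star_dvd_nat (c : ℕ) (x : GaussianInt) (h : (c : GaussianInt) ∣ x) :
    (c : GaussianInt) ∣ star x := by
  rw [natCast_dvd_gauss] at h ⊢
  exact ⟨by simpa using h.1, by simpa using (dvd_neg.mpr h.2)⟩

set_option maxHeartbeats 1000000 in
set_option synthInstance.maxHeartbeats 400000 in
theorem divisor_of_gaussCarmichael_is_cyclic (n : ℕ) (ho : Odd n)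
    (h : GaussCarmichael n) : ∀ d : ℕ, d ∣ n → Nat.Coprime (gPhi d) d := by
  intro d hdn
  obtain ⟨h1, -, hcar⟩ := h
  have hn0 : 0 < n := by omega
  have hd0 : d ≠ 0 := by rintro rfl; rw [Nat.zero_dvd] at hdn; omega
  haveI : NeZero d := ⟨hd0⟩
  by_contra hg
  obtain ⟨q, hq, hqg⟩ := Nat.exists_prime_and_dvd hg
  haveI : Fact q.Prime := ⟨hq⟩
  have hqPhi : q ∣ gPhi d := hqg.trans (Nat.gcd_dvd_left _ _)
  have hqd : q ∣ d := hqg.trans (Nat.gcd_dvd_right _ _)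
  have hqn : q ∣ n := hqd.trans hdn
  have hqodd : Odd q := by
    refine hq.odd_of_ne_two ?_
    rintro rfl
    rw [Nat.odd_iff] at ho
    obtain ⟨m, rfl⟩ := hqn
    omega
  have hd_odd : Odd d := by
    rcases Nat.even_or_odd d with he | hodd
    · exfalso
      have h2n : 2 ∣ n := dvd_trans he.two_dvd hdn
      rw [Nat.odd_iff] at ho
      omega
    · exact hodd
  -- Cauchy: an element of order q in the norm-one group mod d
  haveI : Finite (GQ d) := finite_GQ d
  have hcard : q ∣ Nat.card (gker d) := by rw [← gPhi_eq_card_gker]; exact hqPhi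
  obtain ⟨g, hgord⟩ := exists_prime_orderOf_dvd_card' (G := gker d) q hcard
  set w : GQ d := ((g : (GQ d)ˣ) : GQ d) with hw
  have hwconj : w * gconj d w = 1 := (mem_gker_iff d _).mp g.2
  have hwq : w ^ q = 1 := by
    have h0 : g ^ q = 1 := by rw [← hgord]; exact pow_orderOf_eq_one g
    have h1 := congrArg Subtype.val h0
    have h2 := congrArg Units.val h1
    simpa using h2
  -- 2 is a unit mod d
  have h2unit : IsUnit (2 : GQ d) := by
    have hco : Nat.Coprime 2 d := Nat.coprime_two_left.mpr hd_odd
    obtain ⟨u, v, huv⟩ := Nat.isCoprime_iff_coprime.mpr hco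
    have hdz : gq d ((d : ℕ) : GaussianInt) = 0 := by
      rw [gq, Ideal.Quotient.eq_zero_iff_mem]
      exact Ideal.mem_span_singleton_self _
    have hmap : gq d ((u : GaussianInt) * 2 + (v : GaussianInt) * ((d : ℕ) : GaussianInt))
        = 1 := by
      have hcast := congrArg (fun x : ℤ => gq d ((x : GaussianInt))) huv
      rw [show ((1 : ℤ) : GaussianInt) = 1 from by norm_num, map_one] at hcast
      rw [← hcast]
      congr 1
      push_cast
      ring
    rw [map_add, map_mul, map_mul, hdz, mul_zero, add_zero] at hmap
    have h2g : gq d (2 : GaussianInt) = (2 : GQ d) := map_ofNat _ 2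
    rw [h2g] at hmap
    exact IsUnit.of_mul_eq_one _ (by rw [mul_comm] at hmap; exact hmap)
  -- 1 + w is a unit mod d
  have hunit : IsUnit (1 + w) := by
    by_contra hnu
    have hne : Ideal.span {1 + w} ≠ ⊤ := by rwa [Ne, Ideal.span_singleton_eq_top]
    obtain ⟨m, hm, hle⟩ := Ideal.exists_le_maximal _ hne
    haveI := hm
    have hρ : Ideal.Quotient.mk m (1 + w) = 0 :=
      Ideal.Quotient.eq_zero_iff_mem.mpr (hle (Ideal.mem_span_singleton_self _))
    rw [map_add, map_one] at hρ
    have hρw : Ideal.Quotient.mk m w = -1 := by linear_combination hρ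
    have hone : (-1 : GQ d ⧸ m) = 1 := by
      have hx : (Ideal.Quotient.mk m w) ^ q = 1 := by
        rw [← map_pow, hwq, map_one]
      rw [hρw] at hx
      obtain ⟨k, hk⟩ := hqodd
      rw [hk, pow_succ, pow_mul] at hx
      linear_combination hx
    have h20 : (2 : GQ d ⧸ m) = 0 := by linear_combination -hone
    have h2u := h2unit.map (Ideal.Quotient.mk m)
    rw [map_ofNat] at h2u
    rw [h20] at h2u
    exact not_isUnit_zero h2u
  -- lift w
  obtain ⟨w₀, hw₀⟩ := gq_surj d w
  set z₀ : GaussianInt := 1 + w₀ with hz₀def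
  have hz : gq d z₀ = 1 + w := by rw [hz₀def, map_add, map_one, hw₀]
  set σ : GQ d := gconj d (1 + w) with hσdef
  have hσz : gq d (star z₀) = σ := by rw [hσdef, ← hz, gconj_mk]
  have hrel : 1 + w = w * σ := by
    rw [hσdef, map_add, map_one]
    linear_combination -hwconj
  have hσunit : IsUnit σ := by
    refine isUnit_of_mul_isUnit_right (x := w) ?_
    rw [← hrel]; exact hunit
  -- primes dividing d do not divide norm z₀
  have hdN : ∀ p : ℕ, p.Prime → p ∣ d → ¬ ((p : ℤ) ∣ Zsqrtd.norm z₀) := by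
    intro p hp hpd hpN
    have hNunit : IsUnit (gq d ((Zsqrtd.norm z₀ : ℤ) : GaussianInt)) := by
      rw [Zsqrtd.norm_eq_mul_conj, map_mul, hz, hσz]
      exact hunit.mul hσunit
    obtain ⟨c, hc⟩ := hNunit.exists_right_inv
    obtain ⟨c₀, rfl⟩ := gq_surj d c
    rw [← map_mul, ← map_one (gq d), gq_eq_iff] at hc
    obtain ⟨e, he⟩ := hc
    have hp1 : ((p : ℕ) : GaussianInt) ∣ 1 := by
      have hpdvdN : ((p : ℕ) : GaussianInt) ∣ ((Zsqrtd.norm z₀ : ℤ) : GaussianInt) := by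
        have hpn2 : ((p : ℤ) : GaussianInt) ∣ ((Zsqrtd.norm z₀ : ℤ) : GaussianInt) :=
          map_dvd (Int.castRingHom GaussianInt) hpN
        push_cast at hpn2 ⊢
        exact hpn2
      have hpdvdd : ((p : ℕ) : GaussianInt) ∣ ((d : ℕ) : GaussianInt) := Nat.cast_dvd_cast hpd
      have hone : (1 : GaussianInt)
          = ((Zsqrtd.norm z₀ : ℤ) : GaussianInt) * c₀ - (d : ℕ) * e := by
        linear_combination -he
      rw [hone]
      exact dvd_sub (hpdvdN.mul_right c₀) (hpdvdd.mul_right e)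
    exact gauss_int_prime_not_unit hp (isUnit_of_dvd_one hp1)
  -- split n = a * b
  obtain ⟨a, b, hab, hbco, hapr⟩ := exists_split d n hn0
  have hda : d ∣ a := (hbco.symm).dvd_of_dvd_mul_right (hab ▸ hdn)
  have habco : Nat.Coprime a b := by
    by_contra habc
    obtain ⟨p, hp, hpg⟩ := Nat.exists_prime_and_dvd habc
    have hpa := hpg.trans (Nat.gcd_dvd_left _ _)
    have hpb := hpg.trans (Nat.gcd_dvd_right _ _)
    have hpd := hapr p hp hpa
    have hp1 : p ∣ 1 := hbco ▸ Nat.dvd_gcd hpb hpd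
    exact hp.ne_one (Nat.dvd_one.mp hp1)
  have hZab : IsCoprime ((a : ℕ) : GaussianInt) ((b : ℕ) : GaussianInt) := by
    have h' : IsCoprime (a : ℤ) (b : ℤ) := Nat.isCoprime_iff_coprime.mpr habco
    have h'' := h'.map (Int.castRingHom GaussianInt)
    have e1 : (Int.castRingHom GaussianInt) (a : ℤ) = ((a : ℕ) : GaussianInt) := by simp
    have e2 : (Int.castRingHom GaussianInt) (b : ℤ) = ((b : ℕ) : GaussianInt) := by simp
    rwa [e1, e2] at h''
  obtain ⟨u, v, huv⟩ := hZab
  set z₁ : GaussianInt := v * (b : ℕ) * z₀ + u * (a : ℕ) with hz₁def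
  have hadvd : ((a : ℕ) : GaussianInt) ∣ z₁ - z₀ :=
    ⟨u * (1 - z₀), by rw [hz₁def]; linear_combination z₀ * huv⟩
  have hbdvd : ((b : ℕ) : GaussianInt) ∣ z₁ - 1 :=
    ⟨v * z₀ - v, by rw [hz₁def]; linear_combination huv⟩
  have hastar : ((a : ℕ) : GaussianInt) ∣ star z₁ - star z₀ := by
    have hs := star_dvd_nat a _ hadvd
    rwa [star_sub] at hs
  have hbstar : ((b : ℕ) : GaussianInt) ∣ star z₁ - 1 := by
    have hs := star_dvd_nat b _ hbdvd
    rwa [star_sub, star_one] at hs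
  -- norm z₁ is coprime to n
  have hcop : IsCoprime (n : ℤ) (Zsqrtd.norm z₁) := by
    rw [Int.isCoprime_iff_gcd_eq_one]
    by_contra hgc
    obtain ⟨p, hp, hpg⟩ := Nat.exists_prime_and_dvd hgc
    have hpZn : (p : ℤ) ∣ (n : ℤ) :=
      (Int.natCast_dvd_natCast.mpr hpg).trans (Int.gcd_dvd_left _ _)
    have hpZN : (p : ℤ) ∣ Zsqrtd.norm z₁ :=
      (Int.natCast_dvd_natCast.mpr hpg).trans (Int.gcd_dvd_right _ _)
    have hpn2 : p ∣ n := by exact_mod_cast hpZn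
    have hpN1 : ((p : ℕ) : GaussianInt) ∣ ((Zsqrtd.norm z₁ : ℤ) : GaussianInt) := by
      have := map_dvd (Int.castRingHom GaussianInt) hpZN
      simp only [map_intCast, map_natCast] at this
      exact this
    by_cases hpa : p ∣ a
    · have hpd := hapr p hp hpa
      have h₁ : ((p : ℕ) : GaussianInt)
          ∣ ((Zsqrtd.norm z₁ : ℤ) : GaussianInt) - ((Zsqrtd.norm z₀ : ℤ) : GaussianInt) :=
        dvd_trans (Nat.cast_dvd_cast hpa) (norm_sub_dvd _ _ _ hadvd hastar)
      have h₃ := dvd_sub hpN1 h₁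
      rw [sub_sub_cancel] at h₃
      have h₄ : (p : ℤ) ∣ Zsqrtd.norm z₀ := by
        have h5 : ((p : ℤ) : GaussianInt) ∣ ((Zsqrtd.norm z₀ : ℤ) : GaussianInt) := by
          push_cast at h₃ ⊢
          exact h₃
        exact_mod_cast h5
      exact hdN p hp hpd h₄
    · have hpb : p ∣ b := by
        have hpab : p ∣ a * b := hab ▸ hpn2
        exact ((Nat.Prime.dvd_mul hp).mp hpab).resolve_left hpa
      have h₁ : ((p : ℕ) : GaussianInt) ∣ ((Zsqrtd.norm z₁ : ℤ) : GaussianInt) - 1 := by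
        have hb1 : ((b : ℕ) : GaussianInt)
            ∣ ((Zsqrtd.norm z₁ : ℤ) : GaussianInt) - ((Zsqrtd.norm 1 : ℤ) : GaussianInt) :=
          norm_sub_dvd _ _ _ (by simpa using hbdvd) (by simpa using hbstar)
        rw [Zsqrtd.norm_one] at hb1
        simpa using dvd_trans (Nat.cast_dvd_cast hpb) hb1
      have h₃ := dvd_sub hpN1 h₁
      rw [sub_sub_cancel] at h₃
      exact gauss_int_prime_not_unit hp (isUnit_of_dvd_one h₃)
  -- apply the Carmichael property
  have hFdvd := hcar z₁ hcop
  have hddvd : ((d : ℕ) : GaussianInt) ∣ z₁ ^ gaussF n - star z₁ ^ gaussF n :=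
    (Nat.cast_dvd_cast hdn).trans hFdvd
  have hq1 : gq d z₁ = 1 + w := by
    rw [← hz, gq_eq_iff]
    exact dvd_trans (Nat.cast_dvd_cast hda) hadvd
  have hq2 : gq d (star z₁) = σ := by
    rw [← hσz, gq_eq_iff]
    exact dvd_trans (Nat.cast_dvd_cast hda) hastar
  have hpow : (1 + w) ^ gaussF n = σ ^ gaussF n := by
    have heq := (gq_eq_iff d _ _).mpr hddvd
    rw [map_pow, map_pow, hq1, hq2] at heq
    exact heq
  have hwF : w ^ gaussF n = 1 := by
    have h5 : σ ^ gaussF n * w ^ gaussF n = σ ^ gaussF n * 1 := by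
      rw [mul_one, ← mul_pow, mul_comm σ w, ← hrel, hpow]
    exact (hσunit.pow (gaussF n)).mul_left_cancel h5
  have hgF : g ^ gaussF n = 1 := by
    apply Subtype.ext
    apply Units.ext
    show (((g : (GQ d)ˣ) : GQ d)) ^ gaussF n = 1
    exact hwF
  have hqF : q ∣ gaussF n := hgord ▸ orderOf_dvd_of_pow_eq_one hgF
  rw [Nat.odd_iff] at ho
  unfold gaussF at hqF
  rcases (by omega : n % 4 = 1 ∨ n % 4 = 3) with h4 | h4
  · rw [if_pos h4] at hqF
    have hq1' : q ∣ 1 := by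
      have hqs := Nat.dvd_sub hqn hqF
      rwa [Nat.sub_sub_self (by omega : 1 ≤ n)] at hqs
    exact hq.ne_one (Nat.dvd_one.mp hq1')
  · rw [if_neg (by omega), if_pos h4] at hqF
    have hq1' : q ∣ 1 := by
      have hqs := Nat.dvd_sub hqF hqn
      simpa using hqs
    exact hq.ne_one (Nat.dvd_one.mp hq1')
end
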